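/- arXiv:1512.00650 — 6 statements merged into one kernel-verified Lean document; each statement's English description precedes it below -/
import Mathlib

section
/- Let Γ ⊆ ℝⁿ be uniformly discrete with parameter r (each sup-norm ball of radius at most r contains at most one point of Γ). Let y, v ∈ ℝⁿ with ‖y − v‖∞ < L and R > 0. Then Card(Γ ∩ (B(y,R) Δ B(v,R))) ≤ 2n(R+r)^{n−1}(L+r)/rⁿ, where B(x,R) is the open sup-norm ball and Δ denotes symmetric difference. -/
open Finset

private lemma floor_diff_lt {r : ℝ} (hr : 0 < 2 * r) {a b : ℝ}
    (h : ⌊a / (2 * r)⌋ = ⌊b / (2 * r)⌋) : |a - b| < 2 * r := by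
  have ha1 := Int.floor_le (a / (2 * r))
  have ha2 := Int.lt_floor_add_one (a / (2 * r))
  have hb1 := Int.floor_le (b / (2 * r))
  have hb2 := Int.lt_floor_add_one (b / (2 * r))
  rw [h] at ha1 ha2
  have h1 : (a - b) / (2 * r) < 1 := by rw [sub_div]; linarith
  have h2 : (b - a) / (2 * r) < 1 := by rw [sub_div]; linarith
  rw [abs_sub_lt_iff]
  exact ⟨by linarith [(div_lt_one hr).mp h1], by linarith [(div_lt_one hr).mp h2]⟩

private lemma one_side {n : ℕ} (hn : 0 < n) (Γ : Set (Fin n → ℝ)) {r : ℝ} (hr : 0 < r)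
    (hud : ∀ x : Fin n → ℝ, (Γ ∩ Metric.ball x r).Subsingleton)
    (c w : Fin n → ℝ) {L : ℝ} (hcw : dist c w < L) {R : ℝ} (hR : 0 < R) :
    (Γ ∩ (Metric.ball c R \ Metric.ball w R)).Finite ∧
    ((Γ ∩ (Metric.ball c R \ Metric.ball w R)).ncard : ℝ)
      ≤ n * (R + r) ^ (n - 1) * (L + r) / r ^ n := by
  classical
  have hL : 0 < L := lt_of_le_of_lt dist_nonneg hcw
  have h2r : 0 < 2 * r := by linarith
  have hr' : r ≠ 0 := ne_of_gt hr
  set A := Γ ∩ (Metric.ball c R \ Metric.ball w R) with hA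
  -- separation: distinct points of Γ are 2r-separated in sup norm
  have sep : ∀ x ∈ Γ, ∀ x' ∈ Γ, (∀ j, |x j - x' j| < 2 * r) → x = x' := by
    intro x hx x' hx' h
    refine hud (fun j => (x j + x' j) / 2) ⟨hx, ?_⟩ ⟨hx', ?_⟩
    · rw [Metric.mem_ball, dist_pi_lt_iff hr]
      intro j
      rw [Real.dist_eq]
      have e : x j - (x j + x' j) / 2 = (x j - x' j) / 2 := by ring
      rw [e, abs_div, abs_two]
      linarith [h j]
    · rw [Metric.mem_ball, dist_pi_lt_iff hr]
      intro j
      rw [Real.dist_eq]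
      have e : x' j - (x j + x' j) / 2 = -(x j - x' j) / 2 := by ring
      rw [e, abs_div, abs_two, abs_neg]
      linarith [h j]
  have habs : ∀ x ∈ A, ∀ j, |x j - c j| < R := by
    intro x hx j
    calc |x j - c j| = dist (x j) (c j) := (Real.dist_eq _ _).symm
      _ ≤ dist x c := dist_le_pi_dist x c j
      _ < R := hx.2.1
  have hex : ∀ x ∈ A, ∃ i, R ≤ |x i - w i| := by
    intro x hx
    have hout : ¬ dist x w < R := hx.2.2
    rw [dist_pi_lt_iff hR] at hout
    push_neg at hout
    obtain ⟨i, hi⟩ := hout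
    exact ⟨i, by rwa [Real.dist_eq] at hi⟩
  set ix : (Fin n → ℝ) → Fin n := fun x =>
    if h : ∃ i, R ≤ |x i - w i| then h.choose else ⟨0, hn⟩ with hix
  have hspec : ∀ x ∈ A, R ≤ |x (ix x) - w (ix x)| := by
    intro x hx
    have h := hex x hx
    simp only [hix]
    rw [dif_pos h]
    exact h.choose_spec
  set key : (Fin n → ℝ) → (_ : Fin n) × ℤ × (Fin n → ℤ) := fun x =>
    ⟨ix x, ⌊(|x (ix x) - w (ix x)| - R) / (2 * r)⌋,
      fun j => if j = ix x then 0 else ⌊(x j - c j + R) / (2 * r)⌋⟩ with hkey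
  have hinj : Set.InjOn key A := by
    intro x hx x' hx' hk
    simp only [hkey] at hk
    obtain ⟨hi, hrest⟩ := Sigma.mk.inj_iff.mp hk
    have h2 := eq_of_heq hrest
    have ht := congrArg Prod.fst h2
    have hkfun := congrArg Prod.snd h2
    simp only at ht hkfun
    rw [← hi] at ht hkfun
    have hsx := hspec x hx
    have hsx' := hspec x' hx'
    rw [← hi] at hsx'
    have htlt := floor_diff_lt h2r ht
    have e : (|x (ix x) - w (ix x)| - R) - (|x' (ix x) - w (ix x)| - R)
        = |x (ix x) - w (ix x)| - |x' (ix x) - w (ix x)| := by ring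
    rw [e] at htlt
    have a1 := abs_lt.mp (habs x hx (ix x))
    have a2 := abs_lt.mp (habs x' hx' (ix x))
    refine sep x hx.1 x' hx'.1 ?_
    intro j
    by_cases hj : j = ix x
    · rw [hj]
      rcases le_abs.mp hsx with h1 | h1 <;> rcases le_abs.mp hsx' with h2' | h2'
      · rw [abs_of_nonneg (show (0:ℝ) ≤ x (ix x) - w (ix x) by linarith),
          abs_of_nonneg (show (0:ℝ) ≤ x' (ix x) - w (ix x) by linarith)] at htlt
        have e2 : x (ix x) - w (ix x) - (x' (ix x) - w (ix x)) = x (ix x) - x' (ix x) := by ring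
        rwa [e2] at htlt
      · exfalso; linarith [a1.2, a2.1]
      · exfalso; linarith [a1.1, a2.2]
      · rw [abs_of_nonpos (show x (ix x) - w (ix x) ≤ 0 by linarith),
          abs_of_nonpos (show x' (ix x) - w (ix x) ≤ 0 by linarith)] at htlt
        have e2 : -(x (ix x) - w (ix x)) - -(x' (ix x) - w (ix x)) = x' (ix x) - x (ix x) := by ring
        rw [e2] at htlt
        rwa [abs_sub_comm] at htlt
    · have hkj := congrFun hkfun j
      rw [if_neg hj, if_neg hj] at hkj
      have := floor_diff_lt h2r hkj
      have e2 : x j - c j + R - (x' j - c j + R) = x j - x' j := by ring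
      rwa [e2] at this
  set T : ℤ := ⌊L / (2 * r)⌋ with hT
  set K : ℤ := ⌈R / r⌉ with hK
  set I : Finset ((_ : Fin n) × ℤ × (Fin n → ℤ)) :=
    Finset.univ.sigma (fun i => Finset.Icc 0 T ×ˢ
      Fintype.piFinset (fun j => if j = i then ({0} : Finset ℤ) else Finset.Icc 0 (K - 1)))
      with hI
  have himg : ∀ x ∈ A, key x ∈ I := by
    intro x hx
    simp only [hkey, hI, Finset.mem_sigma, Finset.mem_univ, Finset.mem_product,
      Fintype.mem_piFinset, true_and]
    refine ⟨?_, ?_⟩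
    · rw [Finset.mem_Icc]
      constructor
      · exact Int.floor_nonneg.mpr (div_nonneg (by linarith [hspec x hx]) h2r.le)
      · rw [hT]
        apply Int.floor_le_floor
        rw [div_le_div_iff₀ h2r h2r]
        have h1 := abs_sub_le (x (ix x)) (c (ix x)) (w (ix x))
        have h2 : |c (ix x) - w (ix x)| < L := by
          calc |c (ix x) - w (ix x)| = dist (c (ix x)) (w (ix x)) := (Real.dist_eq _ _).symm
            _ ≤ dist c w := dist_le_pi_dist c w (ix x)
            _ < L := hcw
        have h3 := habs x hx (ix x)
        nlinarith
    · intro j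
      by_cases hj : j = ix x
      · rw [if_pos hj, if_pos hj]
        exact Finset.mem_singleton_self 0
      · rw [if_neg hj, if_neg hj, Finset.mem_Icc]
        have ha := abs_lt.mp (habs x hx j)
        have h0 : 0 < x j - c j + R := by linarith [ha.1]
        constructor
        · exact Int.floor_nonneg.mpr (div_nonneg h0.le h2r.le)
        · have hlt : (x j - c j + R) / (2 * r) < R / r := by
            rw [div_lt_div_iff₀ h2r hr]
            nlinarith [ha.2]
          have hlt2 : ⌊(x j - c j + R) / (2 * r)⌋ < K := by
            rw [hK]
            exact Int.lt_ceil.mpr (lt_of_le_of_lt (Int.floor_le _) hlt)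
          omega
  have himgsub : key '' A ⊆ ↑I := by rintro _ ⟨x, hx, rfl⟩; exact himg x hx
  have hfin : A.Finite := Set.Finite.of_finite_image (I.finite_toSet.subset himgsub) hinj
  refine ⟨hfin, ?_⟩
  have hcard : A.ncard ≤ I.card := by
    rw [← Set.ncard_image_of_injOn hinj]
    calc (key '' A).ncard ≤ (↑I : Set _).ncard := Set.ncard_le_ncard himgsub I.finite_toSet
      _ = I.card := Set.ncard_coe_finset I
  have hIcard : I.card = n * ((T + 1).toNat * K.toNat ^ (n - 1)) := by
    rw [hI, Finset.card_sigma]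
    have hpc : ∀ i : Fin n, (Finset.Icc 0 T ×ˢ Fintype.piFinset fun j =>
        if j = i then ({0} : Finset ℤ) else Finset.Icc 0 (K - 1)).card
        = (T + 1).toNat * K.toNat ^ (n - 1) := by
      intro i
      rw [Finset.card_product, Int.card_Icc, Fintype.card_piFinset]
      congr 1
      · congr 1; omega
      · rw [← Finset.prod_erase_mul _ _ (Finset.mem_univ i), if_pos rfl]
        have hc : ∀ j ∈ Finset.univ.erase i,
            (if j = i then ({0} : Finset ℤ) else Finset.Icc 0 (K - 1)).card = K.toNat := by
          intro j hj
          rw [if_neg (Finset.ne_of_mem_erase hj), Int.card_Icc]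
          congr 1; omega
        rw [Finset.prod_congr rfl hc, Finset.prod_const,
          Finset.card_erase_of_mem (Finset.mem_univ i), Finset.card_univ, Fintype.card_fin]
        simp
    rw [Finset.sum_congr rfl (fun i _ => hpc i), Finset.sum_const, Finset.card_univ,
      Fintype.card_fin, smul_eq_mul]
  have hT0 : (0 : ℤ) ≤ T := Int.floor_nonneg.mpr (div_nonneg hL.le h2r.le)
  have hK1 : (1 : ℤ) ≤ K := by rw [hK]; exact Int.ceil_pos.mpr (div_pos hR hr)
  have hTr : ((T + 1).toNat : ℝ) ≤ (L + 2 * r) / (2 * r) := by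
    have h1 : ((T : ℝ)) ≤ L / (2 * r) := by rw [hT]; exact Int.floor_le _
    have h0 : ((T + 1).toNat : ℤ) = T + 1 := Int.toNat_of_nonneg (by omega)
    have h2 : ((T + 1).toNat : ℝ) = (T : ℝ) + 1 := by
      calc ((T + 1).toNat : ℝ) = (((T + 1).toNat : ℤ) : ℝ) := by push_cast; ring
        _ = ((T + 1 : ℤ) : ℝ) := by rw [h0]
        _ = (T : ℝ) + 1 := by push_cast; ring
    have h3 : (L + 2 * r) / (2 * r) = L / (2 * r) + 1 := by field_simp
    rw [h2, h3]
    linarith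
  have hKr : (K.toNat : ℝ) ≤ (R + r) / r := by
    have h1 : ((K : ℝ)) < R / r + 1 := by rw [hK]; exact Int.ceil_lt_add_one _
    have h0 : ((K.toNat) : ℤ) = K := Int.toNat_of_nonneg (by omega)
    have h2 : ((K.toNat) : ℝ) = (K : ℝ) := by
      calc ((K.toNat) : ℝ) = (((K.toNat) : ℤ) : ℝ) := by push_cast; ring
        _ = (K : ℝ) := by rw [h0]
    rw [h2, le_div_iff₀ hr]
    have h3 : (R / r + 1) * r = R + r := by field_simp
    nlinarith [mul_lt_mul_of_pos_right h1 hr]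
  have hrn : r ^ n = r ^ (n - 1) * r := by
    rw [← pow_succ, Nat.sub_add_cancel hn]
  calc (A.ncard : ℝ) ≤ (I.card : ℝ) := by exact_mod_cast hcard
    _ = n * (((T + 1).toNat : ℝ) * ((K.toNat : ℝ)) ^ (n - 1)) := by
        rw [hIcard]; push_cast; ring
    _ ≤ n * ((L + 2 * r) / (2 * r) * ((R + r) / r) ^ (n - 1)) := by
        gcongr <;> first | exact hTr | exact hKr | positivity
    _ ≤ n * ((L + r) / r * ((R + r) / r) ^ (n - 1)) := by
        have hstep : (L + 2 * r) / (2 * r) ≤ (L + r) / r := by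
          rw [div_le_div_iff₀ h2r hr]; nlinarith
        have hp : (0:ℝ) ≤ ((R + r) / r) ^ (n - 1) := by positivity
        have hn0 : (0:ℝ) ≤ (n:ℝ) := by positivity
        exact mul_le_mul_of_nonneg_left (mul_le_mul_of_nonneg_right hstep hp) hn0
    _ = n * (R + r) ^ (n - 1) * (L + r) / r ^ n := by
        rw [div_pow, hrn]
        field_simp

theorem stmt2 {n : ℕ} (Γ : Set (Fin n → ℝ)) (r : ℝ) (hr : 0 < r)
    (hud : ∀ x : Fin n → ℝ, (Γ ∩ Metric.ball x r).Subsingleton)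
    (y v : Fin n → ℝ) (L : ℝ) (hyv : dist y v < L) (R : ℝ) (hR : 0 < R) :
    ((Γ ∩ symmDiff (Metric.ball y R) (Metric.ball v R)).ncard : ℝ)
      ≤ 2 * n * (R + r) ^ (n - 1) * (L + r) / r ^ n := by
  rcases Nat.eq_zero_or_pos n with h0 | hn
  · subst h0
    have hyv' : y = v := funext fun i => i.elim0
    subst hyv'
    rw [symmDiff_self]
    simp
  · obtain ⟨hf1, hb1⟩ := one_side hn Γ hr hud y v hyv hR
    obtain ⟨hf2, hb2⟩ := one_side hn Γ hr hud v y (by rwa [dist_comm]) hR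
    have hsplit : Γ ∩ symmDiff (Metric.ball y R) (Metric.ball v R)
        = (Γ ∩ (Metric.ball y R \ Metric.ball v R))
          ∪ (Γ ∩ (Metric.ball v R \ Metric.ball y R)) := by
      rw [Set.symmDiff_def, Set.inter_union_distrib_left]
    rw [hsplit]
    have hle := Set.ncard_union_le (Γ ∩ (Metric.ball y R \ Metric.ball v R))
      (Γ ∩ (Metric.ball v R \ Metric.ball y R))
    have hle' : (((Γ ∩ (Metric.ball y R \ Metric.ball v R))
        ∪ (Γ ∩ (Metric.ball v R \ Metric.ball y R))).ncard : ℝ)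
        ≤ ((Γ ∩ (Metric.ball y R \ Metric.ball v R)).ncard : ℝ)
          + ((Γ ∩ (Metric.ball v R \ Metric.ball y R)).ncard : ℝ) := by
      exact_mod_cast hle
    calc _ ≤ _ := hle'
      _ ≤ n * (R + r) ^ (n - 1) * (L + r) / r ^ n
          + n * (R + r) ^ (n - 1) * (L + r) / r ^ n := by linarith
      _ = 2 * n * (R + r) ^ (n - 1) * (L + r) / r ^ n := by ring
end

section
/- Every almost periodic pattern Γ ⊆ ℝⁿ is weakly almost periodic: for every ε > 0 there exists R > 0 such that for all x, y ∈ ℝⁿ there exists v ∈ ℝⁿ with Card((B(x,R) ∩ Γ) Δ ((B(y,R) ∩ Γ) − v)) ≤ ε·Vol(B(0,R)). -/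
open MeasureTheory Metric Set Filter

noncomputable def volBall (n : ℕ) (R : ℝ) : ℝ :=
  (volume (Metric.ball (0 : Fin n → ℝ) R)).toReal

noncomputable def DRplus {n : ℕ} (R : ℝ) (Γ Γ' : Set (Fin n → ℝ)) : ℝ :=
  ⨆ x : Fin n → ℝ, (((symmDiff Γ Γ') ∩ Metric.ball x R).ncard : ℝ) / volBall n R

def RelDense {n : ℕ} (N : Set (Fin n → ℝ)) : Prop :=
  ∃ L > (0:ℝ), ∀ x : Fin n → ℝ, ∃ v ∈ N, dist v x < L

def UnifDiscrete {n : ℕ} (Γ : Set (Fin n → ℝ)) : Prop :=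
  ∃ r > (0:ℝ), ∀ x : Fin n → ℝ, (Γ ∩ Metric.ball x r).Subsingleton

def Delone {n : ℕ} (Γ : Set (Fin n → ℝ)) : Prop :=
  UnifDiscrete Γ ∧ RelDense Γ

def transSet {n : ℕ} (Γ : Set (Fin n → ℝ)) (ε R : ℝ) : Set (Fin n → ℝ) :=
  {v | ∀ R' ≥ R, DRplus R' ((· + v) '' Γ) Γ < ε}

def IsAPP {n : ℕ} (Γ : Set (Fin n → ℝ)) : Prop :=
  Delone Γ ∧ ∀ ε > (0:ℝ), ∃ Rε > (0:ℝ), RelDense (transSet Γ ε Rε)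

def IsWAP {n : ℕ} (Γ : Set (Fin n → ℝ)) : Prop :=
  Delone Γ ∧ ∀ ε > (0:ℝ), ∃ R > (0:ℝ), ∀ x y : Fin n → ℝ, ∃ v : Fin n → ℝ,
    ((symmDiff (Metric.ball x R ∩ Γ) ((· - v) '' (Metric.ball y R ∩ Γ))).ncard : ℝ)
      ≤ ε * volBall n R

namespace Stmt3Aux

variable {n : ℕ}

/-- `r`-separation property. -/
def Sep (Γ : Set (Fin n → ℝ)) (r : ℝ) : Prop :=
  ∀ p ∈ Γ, ∀ q ∈ Γ, p ≠ q → r ≤ dist p q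

lemma volBall_eq {R : ℝ} (hR : 0 < R) : volBall n R = (2*R)^n := by
  unfold volBall
  rw [Real.volume_pi_ball _ hR, ENNReal.toReal_ofReal (by positivity)]
  simp

lemma volBall_pos {R : ℝ} (hR : 0 < R) : 0 < volBall n R := by
  rw [volBall_eq hR]; positivity

lemma sep_of_unif {Γ : Set (Fin n → ℝ)} {r : ℝ} (hr : 0 < r)
    (h : ∀ x : Fin n → ℝ, (Γ ∩ Metric.ball x r).Subsingleton) : Sep Γ r := by
  intro p hp q hq hne
  by_contra hlt
  push_neg at hlt
  exact hne (h p ⟨hp, by simpa [Metric.mem_ball] using hr⟩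
    ⟨hq, by simpa [Metric.mem_ball, dist_comm] using hlt⟩)

lemma sep_image_add {Γ : Set (Fin n → ℝ)} {r : ℝ} (h : Sep Γ r) (u : Fin n → ℝ) :
    Sep ((· + u) '' Γ) r := by
  rintro _ ⟨p, hp, rfl⟩ _ ⟨q, hq, rfl⟩ hne
  rw [dist_add_right]
  exact h p hp q hq (fun hpq => hne (by rw [hpq]))

lemma floor_lt_floor {r a b : ℝ} (hr : 0 < r) (h : r ≤ a - b) : ⌊b/r⌋ < ⌊a/r⌋ := by
  have h1 : b/r + 1 ≤ a/r := by
    rw [div_add' _ _ _ hr.ne']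
    exact div_le_div_of_nonneg_right (by linarith) hr.le
  have := Int.floor_le_floor h1
  rw [Int.floor_add_one] at this
  omega

lemma floor_ne {r a b : ℝ} (hr : 0 < r) (h : r ≤ |a - b|) : ⌊a/r⌋ ≠ ⌊b/r⌋ := by
  rcases le_abs.mp h with h' | h'
  · exact (floor_lt_floor hr h').ne'
  · exact (floor_lt_floor hr (by linarith [abs_nonneg (a-b)] : r ≤ b - a)).ne

/-- The grid map used for counting separated sets. -/
noncomputable def grid (r : ℝ) (p : Fin n → ℝ) : Fin n → ℤ := fun i => ⌊p i / r⌋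

lemma grid_injOn {Γ : Set (Fin n → ℝ)} {r : ℝ} (hr : 0 < r) (hsep : Sep Γ r) :
    Set.InjOn (grid r) Γ := by
  intro p hp q hq he
  by_contra hne
  have hd : ¬ dist p q < r := not_lt.2 (hsep p hp q hq hne)
  rw [dist_pi_lt_iff hr] at hd
  push_neg at hd
  obtain ⟨i, hi⟩ := hd
  exact floor_ne hr (by rwa [Real.dist_eq] at hi) (congrFun he i)

/-- Counting lemma for balls. -/
lemma count_ball {Γ : Set (Fin n → ℝ)} {r : ℝ} (hr : 0 < r) (hsep : Sep Γ r)
    (x : Fin n → ℝ) {R : ℝ} (hR : 0 < R) :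
    (Γ ∩ Metric.ball x R).Finite ∧
      ((Γ ∩ Metric.ball x R).ncard : ℝ) ≤ (2*R/r + 2)^n := by
  set S := Γ ∩ Metric.ball x R with hS
  set B : Finset (Fin n → ℤ) :=
    Fintype.piFinset (fun i => Finset.Icc ⌊(x i - R)/r⌋ ⌊(x i + R)/r⌋) with hB
  have hmem : ∀ p ∈ S, grid r p ∈ B := by
    rintro p ⟨hp, hpb⟩
    rw [Fintype.mem_piFinset]
    intro i
    have h1 : dist (p i) (x i) < R := lt_of_le_of_lt (dist_le_pi_dist p x i) hpb
    rw [Real.dist_eq, abs_lt] at h1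
    rw [Finset.mem_Icc]
    constructor
    · exact Int.floor_le_floor (div_le_div_of_nonneg_right (by linarith) hr.le)
    · exact Int.floor_le_floor (div_le_div_of_nonneg_right (by linarith) hr.le)
  have himg : grid r '' S ⊆ (B : Set (Fin n → ℤ)) := by
    rintro _ ⟨p, hp, rfl⟩; exact hmem p hp
  have hinj : Set.InjOn (grid r) S :=
    (grid_injOn hr hsep).mono (Set.inter_subset_left)
  have hfin : S.Finite :=
    Set.Finite.of_finite_image (B.finite_toSet.subset himg) hinj
  refine ⟨hfin, ?_⟩
  have h1 : S.ncard = (grid r '' S).ncard := (Set.ncard_image_of_injOn hinj).symm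
  have h2 : (grid r '' S).ncard ≤ B.card := by
    have := Set.ncard_le_ncard himg B.finite_toSet
    rwa [Set.ncard_coe_finset] at this
  have h3 : (B.card : ℝ) ≤ (2*R/r + 2)^n := by
    rw [hB, Fintype.card_piFinset]
    push_cast
    calc ∏ i, ((Finset.Icc ⌊(x i - R)/r⌋ ⌊(x i + R)/r⌋).card : ℝ)
        ≤ ∏ _i : Fin n, (2*R/r + 2) := by
          apply Finset.prod_le_prod (fun i _ => by positivity)
          intro i _
          rw [Int.card_Icc]
          have hab : ⌊(x i - R)/r⌋ ≤ ⌊(x i + R)/r⌋ :=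
            Int.floor_le_floor (div_le_div_of_nonneg_right (by linarith) hr.le)
          have hcast : (((⌊(x i + R)/r⌋ + 1 - ⌊(x i - R)/r⌋).toNat : ℕ) : ℝ)
              = ((⌊(x i + R)/r⌋ : ℝ) + 1 - (⌊(x i - R)/r⌋ : ℝ)) := by
            rw [← Int.cast_natCast (R := ℝ),
              Int.toNat_of_nonneg (show (0:ℤ) ≤ _ by omega)]
            push_cast
            ring
          rw [hcast]
          have hf1 : (⌊(x i + R)/r⌋ : ℝ) ≤ (x i + R)/r := Int.floor_le _
          have hf2 : (x i - R)/r - 1 < (⌊(x i - R)/r⌋ : ℝ) := Int.sub_one_lt_floor _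
          have : (x i + R)/r - (x i - R)/r = 2*R/r := by ring
          linarith
      _ = (2*R/r + 2)^n := by
          rw [Finset.prod_const, Finset.card_univ, Fintype.card_fin]
  calc (S.ncard : ℝ) = ((grid r '' S).ncard : ℝ) := by rw [h1]
    _ ≤ (B.card : ℝ) := by exact_mod_cast h2
    _ ≤ _ := h3

/-- Counting lemma for annuli. -/
lemma count_annulus {Γ : Set (Fin n → ℝ)} {r : ℝ} (hr : 0 < r) (hsep : Sep Γ r)
    (x : Fin n → ℝ) {R₁ R₂ : ℝ} (h1 : 0 < R₁) (h12 : R₁ ≤ R₂)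
    (hlow : 0 ≤ 2*R₁/r - 2) :
    ((Γ ∩ (Metric.ball x R₂ \ Metric.ball x R₁)).ncard : ℝ)
      ≤ (2*R₂/r + 2)^n - (2*R₁/r - 2)^n := by
  have hR2 : 0 < R₂ := h1.trans_le h12
  set S := Γ ∩ (Metric.ball x R₂ \ Metric.ball x R₁) with hS
  set Bout : Finset (Fin n → ℤ) :=
    Fintype.piFinset (fun i => Finset.Icc ⌊(x i - R₂)/r⌋ ⌊(x i + R₂)/r⌋) with hBout
  set Bin : Finset (Fin n → ℤ) :=
    Fintype.piFinset (fun i => Finset.Ioo ⌊(x i - R₁)/r⌋ ⌊(x i + R₁)/r⌋) with hBin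
  have hmem : ∀ p ∈ S, grid r p ∈ Bout \ Bin := by
    rintro p ⟨hp, hpb, hpn⟩
    rw [Finset.mem_sdiff]
    constructor
    · rw [Fintype.mem_piFinset]
      intro i
      have h1' : dist (p i) (x i) < R₂ := lt_of_le_of_lt (dist_le_pi_dist p x i) hpb
      rw [Real.dist_eq, abs_lt] at h1'
      rw [Finset.mem_Icc]
      exact ⟨Int.floor_le_floor (div_le_div_of_nonneg_right (by linarith) hr.le),
        Int.floor_le_floor (div_le_div_of_nonneg_right (by linarith) hr.le)⟩
    · rw [Fintype.mem_piFinset]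
      push_neg
      have : ∃ i, R₁ ≤ dist (p i) (x i) := by
        by_contra hc
        push_neg at hc
        exact hpn ((dist_pi_lt_iff h1).mpr hc)
      obtain ⟨i, hi⟩ := this
      refine ⟨i, ?_⟩
      rw [Real.dist_eq] at hi
      rw [Finset.mem_Ioo]
      rcases le_abs.mp hi with h' | h'
      · -- p i - x i ≥ R₁, so p i ≥ x i + R₁
        intro ⟨_, hlt⟩
        exact absurd (Int.floor_le_floor
          (div_le_div_of_nonneg_right (by linarith) hr.le) :
          ⌊(x i + R₁)/r⌋ ≤ ⌊p i / r⌋) (by simpa [grid] using not_le.mpr hlt)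
      · -- x i - p i ≥ R₁, so p i ≤ x i - R₁
        intro ⟨hgt, _⟩
        exact absurd (Int.floor_le_floor
          (div_le_div_of_nonneg_right (by linarith) hr.le) :
          ⌊p i / r⌋ ≤ ⌊(x i - R₁)/r⌋) (by simpa [grid] using not_le.mpr hgt)
  have himg : grid r '' S ⊆ ((Bout \ Bin : Finset (Fin n → ℤ)) : Set (Fin n → ℤ)) := by
    rintro _ ⟨p, hp, rfl⟩; exact_mod_cast hmem p hp
  have hinj : Set.InjOn (grid r) S :=
    (grid_injOn hr hsep).mono (Set.inter_subset_left)
  have h2 : (grid r '' S).ncard ≤ (Bout \ Bin).card := by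
    have := Set.ncard_le_ncard himg (Bout \ Bin).finite_toSet
    rwa [Set.ncard_coe_finset] at this
  have hsub : Bin ⊆ Bout := by
    intro z hz
    rw [hBin, Fintype.mem_piFinset] at hz
    rw [hBout, Fintype.mem_piFinset]
    intro i
    have := hz i
    rw [Finset.mem_Ioo] at this
    rw [Finset.mem_Icc]
    have ha : ⌊(x i - R₂)/r⌋ ≤ ⌊(x i - R₁)/r⌋ :=
      Int.floor_le_floor (div_le_div_of_nonneg_right (by linarith) hr.le)
    have hb : ⌊(x i + R₁)/r⌋ ≤ ⌊(x i + R₂)/r⌋ :=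
      Int.floor_le_floor (div_le_div_of_nonneg_right (by linarith) hr.le)
    omega
  have hout : (Bout.card : ℝ) ≤ (2*R₂/r + 2)^n := by
    rw [hBout, Fintype.card_piFinset]
    push_cast
    calc ∏ i, ((Finset.Icc ⌊(x i - R₂)/r⌋ ⌊(x i + R₂)/r⌋).card : ℝ)
        ≤ ∏ _i : Fin n, (2*R₂/r + 2) := by
          apply Finset.prod_le_prod (fun i _ => by positivity)
          intro i _
          rw [Int.card_Icc]
          have hab : ⌊(x i - R₂)/r⌋ ≤ ⌊(x i + R₂)/r⌋ :=
            Int.floor_le_floor (div_le_div_of_nonneg_right (by linarith) hr.le)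
          have hcast : (((⌊(x i + R₂)/r⌋ + 1 - ⌊(x i - R₂)/r⌋).toNat : ℕ) : ℝ)
              = ((⌊(x i + R₂)/r⌋ : ℝ) + 1 - (⌊(x i - R₂)/r⌋ : ℝ)) := by
            rw [← Int.cast_natCast (R := ℝ),
              Int.toNat_of_nonneg (show (0:ℤ) ≤ _ by omega)]
            push_cast
            ring
          rw [hcast]
          have hf1 : (⌊(x i + R₂)/r⌋ : ℝ) ≤ (x i + R₂)/r := Int.floor_le _
          have hf2 : (x i - R₂)/r - 1 < (⌊(x i - R₂)/r⌋ : ℝ) := Int.sub_one_lt_floor _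
          have : (x i + R₂)/r - (x i - R₂)/r = 2*R₂/r := by ring
          linarith
      _ = (2*R₂/r + 2)^n := by
          rw [Finset.prod_const, Finset.card_univ, Fintype.card_fin]
  have hin : (2*R₁/r - 2)^n ≤ (Bin.card : ℝ) := by
    rw [hBin, Fintype.card_piFinset]
    push_cast
    calc ((2*R₁/r - 2 : ℝ))^n = ∏ _i : Fin n, (2*R₁/r - 2) := by
          rw [Finset.prod_const, Finset.card_univ, Fintype.card_fin]
      _ ≤ ∏ i, ((Finset.Ioo ⌊(x i - R₁)/r⌋ ⌊(x i + R₁)/r⌋).card : ℝ) := by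
          apply Finset.prod_le_prod (fun i _ => hlow)
          intro i _
          rw [Int.card_Ioo]
          have : ((⌊(x i + R₁)/r⌋ - ⌊(x i - R₁)/r⌋ - 1 : ℤ) : ℝ)
              ≤ ((⌊(x i + R₁)/r⌋ - ⌊(x i - R₁)/r⌋ - 1).toNat : ℝ) := by
            exact_mod_cast Int.self_le_toNat _
          refine le_trans ?_ this
          push_cast
          have hf1 : (x i + R₁)/r - 1 < (⌊(x i + R₁)/r⌋ : ℝ) := Int.sub_one_lt_floor _
          have hf2 : (⌊(x i - R₁)/r⌋ : ℝ) ≤ (x i - R₁)/r := Int.floor_le _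
          have : (x i + R₁)/r - (x i - R₁)/r = 2*R₁/r := by ring
          linarith
  have hcard : ((Bout \ Bin).card : ℝ) = (Bout.card : ℝ) - (Bin.card : ℝ) := by
    rw [Finset.card_sdiff_of_subset hsub]
    push_cast [Nat.cast_sub (Finset.card_le_card hsub)]
    ring
  have h1' : (S.ncard : ℝ) ≤ ((Bout \ Bin).card : ℝ) := by
    rw [← Set.ncard_image_of_injOn hinj]
    exact_mod_cast h2
  rw [hcard] at h1'
  linarith

/-- Finiteness of `Γ ∩ ball`. -/
lemma finite_inter_ball {Γ : Set (Fin n → ℝ)} {r : ℝ} (hr : 0 < r) (hsep : Sep Γ r)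
    (x : Fin n → ℝ) (R : ℝ) : (Γ ∩ Metric.ball x R).Finite := by
  rcases le_or_gt R 0 with h | h
  · have : Metric.ball x R = ∅ := Metric.ball_eq_empty.mpr h
    simp [this]
  · exact (count_ball hr hsep x h).1

/-- Every term of the `DRplus` sup is at most the sup. -/
lemma le_DRplus {Γ₁ Γ₂ : Set (Fin n → ℝ)} {r : ℝ} (hr : 0 < r)
    (h1 : Sep Γ₁ r) (h2 : Sep Γ₂ r) {R : ℝ} (hR : 0 < R) (x : Fin n → ℝ) :
    (((symmDiff Γ₁ Γ₂) ∩ Metric.ball x R).ncard : ℝ) / volBall n R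
      ≤ DRplus R Γ₁ Γ₂ := by
  apply le_ciSup
    (f := fun x : Fin n → ℝ =>
      (((symmDiff Γ₁ Γ₂) ∩ Metric.ball x R).ncard : ℝ) / volBall n R)
  refine ⟨2*(2*R/r + 2)^n / volBall n R, ?_⟩
  rintro _ ⟨y, rfl⟩
  apply div_le_div_of_nonneg_right ?_ (volBall_pos (n := n) hR).le |>.trans_eq rfl
  have hsub : symmDiff Γ₁ Γ₂ ∩ Metric.ball y R
      ⊆ (Γ₁ ∩ Metric.ball y R) ∪ (Γ₂ ∩ Metric.ball y R) := by
    rintro p ⟨hp, hpb⟩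
    rcases Set.mem_symmDiff.mp hp with ⟨h, _⟩ | ⟨h, _⟩
    · exact Or.inl ⟨h, hpb⟩
    · exact Or.inr ⟨h, hpb⟩
  calc ((symmDiff Γ₁ Γ₂ ∩ Metric.ball y R).ncard : ℝ)
      ≤ (((Γ₁ ∩ Metric.ball y R) ∪ (Γ₂ ∩ Metric.ball y R)).ncard : ℝ) := by
        exact_mod_cast Set.ncard_le_ncard hsub
          (((count_ball hr h1 y hR).1).union ((count_ball hr h2 y hR).1))
    _ ≤ ((Γ₁ ∩ Metric.ball y R).ncard : ℝ) + ((Γ₂ ∩ Metric.ball y R).ncard : ℝ) := by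
        exact_mod_cast Set.ncard_union_le _ _
    _ ≤ (2*R/r + 2)^n + (2*R/r + 2)^n :=
        add_le_add (count_ball hr h1 y hR).2 (count_ball hr h2 y hR).2
    _ = 2*(2*R/r + 2)^n := by ring

lemma image_add_ball (u y : Fin n → ℝ) (R : ℝ) :
    (· + u) '' Metric.ball y R = Metric.ball (y + u) R := by
  ext q
  simp only [Set.mem_image, Metric.mem_ball]
  constructor
  · rintro ⟨a, ha, rfl⟩
    rwa [dist_add_right]
  · intro h
    refine ⟨q - u, ?_, by abel⟩
    have h2 : dist (q - u + u) (y + u) = dist (q - u) y := dist_add_right _ _ _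
    rw [sub_add_cancel] at h2
    rwa [← h2]

end Stmt3Aux

theorem stmt3 {n : ℕ} (Γ : Set (Fin n → ℝ)) (hΓ : IsAPP Γ) : IsWAP Γ := by
  obtain ⟨hDel, hAPP⟩ := hΓ
  refine ⟨hDel, ?_⟩
  intro ε hε
  obtain ⟨r, hr, hU⟩ := hDel.1
  have hsep : Stmt3Aux.Sep Γ r := Stmt3Aux.sep_of_unif hr hU
  set δ := ε/2 with hδ
  have hδpos : 0 < δ := by positivity
  obtain ⟨Rδ, hRδ, hRel⟩ := hAPP δ hδpos
  obtain ⟨L, hL, hLd⟩ := hRel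
  -- the limiting inequality
  have h0 : ∀ c : ℝ, Tendsto (fun R : ℝ => c / R) atTop (nhds 0) :=
    fun c => tendsto_const_nhds.div_atTop tendsto_id
  have hA : Tendsto (fun R : ℝ => δ*(2+2*L/R)^n) atTop (nhds (δ*2^n)) := by
    have := (((tendsto_const_nhds (x := (2:ℝ))).add (h0 (2*L))).pow n).const_mul δ
    simpa using this
  have hB : ∀ c : ℝ, Tendsto (fun R : ℝ => (2/r + c/R)^n) atTop (nhds ((2/r)^n)) := by
    intro c
    have := ((tendsto_const_nhds (x := (2/r:ℝ))).add (h0 c)).pow n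
    simpa using this
  have hC : ∀ c : ℝ, Tendsto (fun R : ℝ => (2/r - c/R)^n) atTop (nhds ((2/r)^n)) := by
    intro c
    have := ((tendsto_const_nhds (x := (2/r:ℝ))).sub (h0 c)).pow n
    simpa using this
  have hkey : Tendsto (fun R : ℝ =>
      δ*(2+2*L/R)^n + ((2/r+2/R)^n - (2/r-(2*L/r+2)/R)^n)
        + ((2/r+(2*L/r+2)/R)^n - (2/r-2/R)^n)) atTop (nhds (δ*2^n)) := by
    have := (hA.add ((hB 2).sub (hC (2*L/r+2)))).add ((hB (2*L/r+2)).sub (hC 2))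
    simpa using this
  have hlt : δ*2^n < ε*2^n := by
    have hde : δ < ε := by rw [hδ]; linarith
    exact mul_lt_mul_of_pos_right hde (by positivity)
  have hev1 := hkey.eventually (gt_mem_nhds hlt)
  obtain ⟨R, hR1, hRa, hRb, hRc⟩ :=
    (hev1.and ((eventually_ge_atTop (1:ℝ)).and
      ((eventually_ge_atTop Rδ).and (eventually_ge_atTop (L+r))))).exists
  have hRpos : (0:ℝ) < R := by linarith
  have hRne : R ≠ 0 := hRpos.ne'
  have hrne : r ≠ 0 := hr.ne'
  have hmain : δ*(2*(R+L))^n + ((2*R/r+2)^n - (2*(R-L)/r-2)^n)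
      + ((2*(R+L)/r+2)^n - (2*R/r-2)^n) ≤ ε*(2*R)^n := by
    have e1 : 2*(R+L) = (2+2*L/R)*R := by field_simp
    have e2 : 2*R/r+2 = (2/r+2/R)*R := by field_simp
    have e3 : 2*(R-L)/r-2 = (2/r-(2*L/r+2)/R)*R := by field_simp; ring
    have e4 : 2*(R+L)/r+2 = (2/r+(2*L/r+2)/R)*R := by field_simp; ring
    have e5 : 2*R/r-2 = (2/r-2/R)*R := by field_simp
    have e6 : ε*(2*R)^n = (ε*2^n)*R^n := by rw [mul_pow]; ring
    rw [e4, e3, e5, e2, e1, e6, mul_pow, mul_pow, mul_pow, mul_pow, mul_pow]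
    have := mul_le_mul_of_nonneg_right hR1.le (by positivity : (0:ℝ) ≤ R^n)
    calc δ*((2+2*L/R)^n*R^n) + ((2/r+2/R)^n*R^n - (2/r-(2*L/r+2)/R)^n*R^n)
          + ((2/r+(2*L/r+2)/R)^n*R^n - (2/r-2/R)^n*R^n)
        = (δ*(2+2*L/R)^n + ((2/r+2/R)^n - (2/r-(2*L/r+2)/R)^n)
          + ((2/r+(2*L/r+2)/R)^n - (2/r-2/R)^n)) * R^n := by ring
      _ ≤ (ε*2^n)*R^n := this
  refine ⟨R, hRpos, fun x y => ?_⟩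
  obtain ⟨u, hu, hud⟩ := hLd (x - y)
  refine ⟨-u, ?_⟩
  set Γu := (· + u) '' Γ with hΓu
  have hsepu : Stmt3Aux.Sep Γu r := Stmt3Aux.sep_image_add hsep u
  set z := y + u with hz
  have hzx : dist z x < L := by
    rw [dist_eq_norm] at hud ⊢
    have hzz : z - x = u - (x - y) := by rw [hz]; abel
    rw [hzz]; exact hud
  have himage : (· - (-u)) '' (Metric.ball y R ∩ Γ) = Metric.ball z R ∩ Γu := by
    have hfun : (· - (-u)) = (· + u : (Fin n → ℝ) → (Fin n → ℝ)) := by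
      funext a; rw [sub_neg_eq_add]
    rw [hfun, Set.image_inter (add_left_injective u), Stmt3Aux.image_add_ball]
  rw [himage]
  set P1 := symmDiff Γu Γ ∩ Metric.ball x (R+L) with hP1
  set P2 := Γ ∩ (Metric.ball x R \ Metric.ball x (R-L)) with hP2
  set P3 := Γu ∩ (Metric.ball x (R+L) \ Metric.ball x R) with hP3
  have hxz : Metric.ball x (R-L) ⊆ Metric.ball z R := by
    intro q hq
    rw [Metric.mem_ball] at hq ⊢
    have h1 : dist q z ≤ dist q x + dist x z := dist_triangle _ _ _
    have h2 : dist x z < L := by rwa [dist_comm]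
    linarith
  have hzRL : Metric.ball z R ⊆ Metric.ball x (R+L) := by
    intro q hq
    rw [Metric.mem_ball] at hq ⊢
    have h1 : dist q x ≤ dist q z + dist z x := dist_triangle _ _ _
    linarith
  have hxRL : Metric.ball x R ⊆ Metric.ball x (R+L) :=
    Metric.ball_subset_ball (by linarith)
  have hsub : symmDiff (Metric.ball x R ∩ Γ) (Metric.ball z R ∩ Γu)
      ⊆ P1 ∪ P2 ∪ P3 := by
    intro p hp
    rcases Set.mem_symmDiff.mp hp with ⟨⟨hpb, hpΓ⟩, hnot⟩ | ⟨⟨hpb, hpΓu⟩, hnot⟩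
    · by_cases hmem : p ∈ Γu
      · have hpz : p ∉ Metric.ball z R := fun hc => hnot ⟨hc, hmem⟩
        have hpin : p ∉ Metric.ball x (R-L) := fun hc => hpz (hxz hc)
        exact Or.inl (Or.inr ⟨hpΓ, hpb, hpin⟩)
      · exact Or.inl (Or.inl ⟨Set.mem_symmDiff.mpr (Or.inr ⟨hpΓ, hmem⟩), hxRL hpb⟩)
    · by_cases hmem : p ∈ Γ
      · have hpx : p ∉ Metric.ball x R := fun hc => hnot ⟨hc, hmem⟩
        exact Or.inr ⟨hpΓu, hzRL hpb, hpx⟩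
      · exact Or.inl (Or.inl ⟨Set.mem_symmDiff.mpr (Or.inl ⟨hpΓu, hmem⟩), hzRL hpb⟩)
  have hRL : (0:ℝ) < R + L := by linarith
  have hfinP1 : P1.Finite := by
    apply Set.Finite.subset ((Stmt3Aux.finite_inter_ball hr hsep x (R+L)).union
      (Stmt3Aux.finite_inter_ball hr hsepu x (R+L)))
    rintro p ⟨hps, hpb⟩
    rcases Set.mem_symmDiff.mp hps with ⟨h, _⟩ | ⟨h, _⟩
    · exact Or.inr ⟨h, hpb⟩
    · exact Or.inl ⟨h, hpb⟩
  have hfinP2 : P2.Finite := (Stmt3Aux.finite_inter_ball hr hsep x R).subset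
    (fun p hp => ⟨hp.1, hp.2.1⟩)
  have hfinP3 : P3.Finite := (Stmt3Aux.finite_inter_ball hr hsepu x (R+L)).subset
    (fun p hp => ⟨hp.1, hp.2.1⟩)
  have hDR : DRplus (R+L) Γu Γ < δ := hu (R+L) (by linarith)
  have hP1le : (P1.ncard : ℝ) ≤ δ * (2*(R+L))^n := by
    have h1 := (Stmt3Aux.le_DRplus hr hsepu hsep hRL x).trans_lt hDR
    rw [div_lt_iff₀ (Stmt3Aux.volBall_pos hRL), Stmt3Aux.volBall_eq hRL] at h1
    exact h1.le
  have hP2le : (P2.ncard : ℝ) ≤ (2*R/r+2)^n - (2*(R-L)/r-2)^n := by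
    have hRLpos : 0 < R - L := by linarith
    have hlow : 0 ≤ 2*(R-L)/r - 2 := by
      rw [sub_nonneg, le_div_iff₀ hr]; linarith
    exact Stmt3Aux.count_annulus hr hsep x hRLpos (by linarith) hlow
  have hP3le : (P3.ncard : ℝ) ≤ (2*(R+L)/r+2)^n - (2*R/r-2)^n := by
    have hlow : 0 ≤ 2*R/r - 2 := by
      rw [sub_nonneg, le_div_iff₀ hr]; linarith
    exact Stmt3Aux.count_annulus hr hsepu x hRpos (by linarith) hlow
  calc ((symmDiff (Metric.ball x R ∩ Γ) (Metric.ball z R ∩ Γu)).ncard : ℝ)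
      ≤ ((P1 ∪ P2 ∪ P3).ncard : ℝ) := by
        exact_mod_cast Set.ncard_le_ncard hsub ((hfinP1.union hfinP2).union hfinP3)
    _ ≤ (P1.ncard : ℝ) + P2.ncard + P3.ncard := by
        have h := (Set.ncard_union_le (P1 ∪ P2) P3).trans
          (add_le_add_left (Set.ncard_union_le P1 P2) _)
        exact_mod_cast h
    _ ≤ δ*(2*(R+L))^n + ((2*R/r+2)^n - (2*(R-L)/r-2)^n)
          + ((2*(R+L)/r+2)^n - (2*R/r-2)^n) :=
        add_le_add (add_le_add hP1le hP2le) hP3le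
    _ ≤ ε*(2*R)^n := hmain
    _ = ε * volBall n R := by rw [Stmt3Aux.volBall_eq hRpos]
end

section
/- Every weakly almost periodic set Γ ⊆ ℝⁿ possesses a uniform density: there exists a number D(Γ) such that for every ε > 0 there exists R_ε > 0 with |Card(Γ ∩ B(x,R))/Vol(B_R) − D(Γ)| < ε for all R > R_ε and all x ∈ ℝⁿ. -/
open MeasureTheory Metric Set Filter

section Auxiliary

open scoped ENNReal symmDiff Topology

lemma vol_ball_eq (n : ℕ) (x : Fin n → ℝ) (r : ℝ) (hr : 0 < r) :
    volume (Metric.ball x r) = ENNReal.ofReal ((2*r)^n) := by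
  rw [volume_pi_ball _ hr]
  simp [Real.volume_ball, ← ENNReal.ofReal_pow (by linarith : (0:ℝ) ≤ 2*r)]
  rw [ENNReal.ofReal_pow (by positivity), ENNReal.ofReal_mul (by norm_num), ENNReal.ofReal_ofNat]

lemma volBall_eq (n : ℕ) (r : ℝ) (hr : 0 < r) : volBall n r = (2*r)^n := by
  rw [volBall, vol_ball_eq n _ r hr, ENNReal.toReal_ofReal (by positivity)]

lemma volBall_pos (n : ℕ) (r : ℝ) (hr : 0 < r) : 0 < volBall n r := by
  rw [volBall_eq n r hr]; positivity

lemma volBall_ratio (n : ℕ) {S T : ℝ} (hS : 0 < S) (hT : 0 < T) :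
    volBall n T / volBall n S = (T/S)^n := by
  rw [volBall_eq n T hT, volBall_eq n S hS, ← div_pow]
  congr 1
  field_simp

lemma tendsto_ratio_pow (n : ℕ) (R : ℝ) :
    Tendsto (fun S : ℝ => ((S + R)/S)^n) atTop (𝓝 1) := by
  have h1 : Tendsto (fun S : ℝ => (S + R)/S) atTop (𝓝 1) := by
    have h2 : Tendsto (fun S : ℝ => 1 + R * S⁻¹) atTop (𝓝 (1 + R * 0)) :=
      tendsto_const_nhds.add (tendsto_inv_atTop_zero.const_mul R)
    rw [mul_zero, add_zero] at h2
    apply h2.congr'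
    filter_upwards [eventually_gt_atTop (0:ℝ)] with S hS
    field_simp
  simpa using h1.pow n

lemma dist_ge {n : ℕ} {Γ : Set (Fin n → ℝ)} {r : ℝ}
    (hsub : ∀ x : Fin n → ℝ, (Γ ∩ Metric.ball x r).Subsingleton)
    {γ γ' : Fin n → ℝ} (hγ : γ ∈ Γ) (hγ' : γ' ∈ Γ) (hne : γ ≠ γ') :
    r ≤ dist γ γ' := by
  by_contra h
  push_neg at h
  have hrpos : 0 < r := (dist_nonneg).trans_lt h
  exact hne (hsub γ' ⟨hγ, by simpa [mem_ball] using h⟩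
    ⟨hγ', by simpa [mem_ball] using hrpos⟩)

lemma finite_inter {n : ℕ} {Γ : Set (Fin n → ℝ)} (hU : UnifDiscrete Γ)
    (x : Fin n → ℝ) (S : ℝ) : (Γ ∩ Metric.ball x S).Finite := by
  obtain ⟨r, hr, hsub⟩ := hU
  by_contra hinf
  have hinf' : (Γ ∩ Metric.ball x S).Infinite := hinf
  set A := (volume (Metric.ball x (S + r))).toReal with hA
  set V := (2*(r/2))^n with hV
  have hVpos : 0 < V := by positivity
  obtain ⟨F, htsub, htcard⟩ := hinf'.exists_subset_card_eq (⌈A / V⌉₊ + 1)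
  have hFsub : ∀ γ ∈ F, γ ∈ Γ ∩ Metric.ball x S := fun γ hγ => htsub hγ
  have hdisj : (F : Set (Fin n → ℝ)).PairwiseDisjoint
      (fun γ => Metric.ball γ (r/2)) := by
    intro a ha b hb hab
    apply Metric.ball_disjoint_ball
    rw [add_halves]
    exact dist_ge hsub (hFsub a ha).1 (hFsub b hb).1 hab
  have hunion : (⋃ γ ∈ F, Metric.ball γ (r/2)) ⊆ Metric.ball x (S + r) := by
    intro z hz
    simp only [Set.mem_iUnion] at hz
    obtain ⟨γ, hγ, hzγ⟩ := hz
    have h1 := (hFsub γ hγ).2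
    rw [mem_ball] at *
    calc dist z x ≤ dist z γ + dist γ x := dist_triangle _ _ _
      _ < r/2 + S := by linarith
      _ ≤ S + r := by linarith
  have hmeas : volume (⋃ γ ∈ F, Metric.ball γ (r/2))
      = F.card * ENNReal.ofReal V := by
    rw [measure_biUnion_finset hdisj (fun γ _ => measurableSet_ball)]
    simp_rw [vol_ball_eq n _ (r/2) (by positivity)]
    rw [Finset.sum_const, nsmul_eq_mul]
  have hle : (F.card : ℝ≥0∞) * ENNReal.ofReal V ≤ volume (Metric.ball x (S + r)) :=
    hmeas ▸ measure_mono hunion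
  have hfin : volume (Metric.ball x (S + r)) ≠ ⊤ := measure_ball_lt_top.ne
  have hreal : (F.card : ℝ) * V ≤ A := by
    have := ENNReal.toReal_mono hfin hle
    rwa [ENNReal.toReal_mul, ENNReal.toReal_natCast, ENNReal.toReal_ofReal hVpos.le] at this
  have h1 : A / V < (F.card : ℝ) := by
    rw [htcard]
    push_cast
    have := Nat.le_ceil (A / V)
    linarith
  have := (div_lt_iff₀ hVpos).mp h1
  linarith

lemma ncard_le_of_symmDiff {α : Type*} {A B : Set α} (hA : A.Finite) (hB : B.Finite) :
    A.ncard ≤ B.ncard + (A ∆ B).ncard := by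
  have hsd : (A ∆ B).Finite := by
    rw [Set.symmDiff_def]
    exact hA.diff.union hB.diff
  have hsub : A ⊆ B ∪ (A ∆ B) := by
    intro a ha
    by_cases h : a ∈ B
    · exact Or.inl h
    · exact Or.inr (Or.inl ⟨ha, h⟩)
  calc A.ncard ≤ (B ∪ (A ∆ B)).ncard := Set.ncard_le_ncard hsub (hB.union hsd)
    _ ≤ B.ncard + (A ∆ B).ncard := Set.ncard_union_le _ _

lemma count_compare {n : ℕ} {Γ : Set (Fin n → ℝ)} (hU : UnifDiscrete Γ)
    {ε R : ℝ}
    (hW : ∀ x y : Fin n → ℝ, ∃ v : Fin n → ℝ,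
      ((symmDiff (Metric.ball x R ∩ Γ) ((· - v) '' (Metric.ball y R ∩ Γ))).ncard : ℝ)
        ≤ ε * volBall n R)
    (x y : Fin n → ℝ) :
    ((Γ ∩ Metric.ball x R).ncard : ℝ) ≤ (Γ ∩ Metric.ball y R).ncard + ε * volBall n R := by
  obtain ⟨v, hv⟩ := hW x y
  have hA : (Metric.ball x R ∩ Γ).Finite := by
    rw [Set.inter_comm]; exact finite_inter hU x R
  have hBy : (Metric.ball y R ∩ Γ).Finite := by
    rw [Set.inter_comm]; exact finite_inter hU y R
  have hB : ((· - v) '' (Metric.ball y R ∩ Γ)).Finite := hBy.image _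
  have hinj : Function.Injective (fun p : Fin n → ℝ => p - v) :=
    fun a b h => by simpa using congrArg (· + v) h
  have hcardB : ((· - v) '' (Metric.ball y R ∩ Γ)).ncard = (Metric.ball y R ∩ Γ).ncard :=
    Set.ncard_image_of_injective _ hinj
  have h1 := ncard_le_of_symmDiff hA hB
  have h2 : ((Metric.ball x R ∩ Γ).ncard : ℝ)
      ≤ (Metric.ball y R ∩ Γ).ncard
        + ((symmDiff (Metric.ball x R ∩ Γ) ((· - v) '' (Metric.ball y R ∩ Γ))).ncard : ℝ) := by
    rw [← hcardB]; exact_mod_cast h1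
  rw [Set.inter_comm Γ, Set.inter_comm Γ]
  linarith

lemma fubini_count {n : ℕ} {Γ : Set (Fin n → ℝ)} (hU : UnifDiscrete Γ)
    (x : Fin n → ℝ) {R R' : ℝ} :
    ∫⁻ y in Metric.ball x R', ((Γ ∩ Metric.ball y R).ncard : ℝ≥0∞) =
      ∑ γ ∈ (finite_inter hU x (R' + R)).toFinset,
        volume (Metric.ball γ R ∩ Metric.ball x R') := by
  classical
  set Ft := (finite_inter hU x (R' + R)).toFinset with hFt
  have hcongr : ∀ y ∈ Metric.ball x R',
      ((Γ ∩ Metric.ball y R).ncard : ℝ≥0∞)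
        = ∑ γ ∈ Ft, (Metric.ball γ R).indicator (fun _ => (1:ℝ≥0∞)) y := by
    intro y hy
    have hset : Γ ∩ Metric.ball y R
        = ↑(Ft.filter (fun γ => y ∈ Metric.ball γ R)) := by
      ext γ
      simp only [Finset.coe_filter, Set.mem_setOf_eq, Finset.mem_coe, hFt,
        Set.Finite.mem_toFinset, Set.mem_inter_iff, mem_ball]
      constructor
      · rintro ⟨hγΓ, hγy⟩
        refine ⟨⟨hγΓ, ?_⟩, by rwa [dist_comm]⟩
        calc dist γ x ≤ dist γ y + dist y x := dist_triangle _ _ _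
          _ < R + R' := by rw [mem_ball] at hy; exact add_lt_add hγy hy
          _ = R' + R := by ring
      · rintro ⟨⟨hγΓ, _⟩, hyγ⟩
        exact ⟨hγΓ, by rwa [dist_comm]⟩
    rw [hset, Set.ncard_coe_finset, Finset.card_filter]
    push_cast
    simp [Set.indicator_apply]
  rw [setLIntegral_congr_fun measurableSet_ball (fun y hy => hcongr y hy)]
  rw [lintegral_finset_sum _ (fun γ _ => (measurable_const.indicator measurableSet_ball))]
  congr 1
  ext γ
  rw [lintegral_indicator measurableSet_ball]
  rw [Measure.restrict_restrict measurableSet_ball]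
  simp

lemma est_upper {n : ℕ} {Γ : Set (Fin n → ℝ)} (hU : UnifDiscrete Γ)
    {R : ℝ} (hR : 0 < R) {C : ℝ} (hC : 0 ≤ C)
    (hcmp : ∀ y : Fin n → ℝ, ((Γ ∩ Metric.ball y R).ncard : ℝ) ≤ C)
    (x : Fin n → ℝ) {S : ℝ} (hS : 0 < S) :
    ((Γ ∩ Metric.ball x S).ncard : ℝ) * volBall n R ≤ C * volBall n (S + R) := by
  have key := fubini_count hU x (R := R) (R' := S + R)
  set Ft := (finite_inter hU x ((S + R) + R)).toFinset with hFt
  set G := (finite_inter hU x S).toFinset with hG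
  have hGF : G ⊆ Ft := by
    intro γ hγ
    rw [hG, Set.Finite.mem_toFinset] at hγ
    rw [hFt, Set.Finite.mem_toFinset]
    have h2 : dist γ x < S := hγ.2
    exact ⟨hγ.1, by rw [mem_ball]; linarith⟩
  have hterm : ∀ γ ∈ G, volume (Metric.ball γ R ∩ Metric.ball x (S + R))
      = ENNReal.ofReal ((2*R)^n) := by
    intro γ hγ
    rw [hG, Set.Finite.mem_toFinset] at hγ
    have hsub : Metric.ball γ R ⊆ Metric.ball x (S + R) := by
      intro z hz
      rw [mem_ball] at *
      calc dist z x ≤ dist z γ + dist γ x := dist_triangle _ _ _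
        _ < R + S := by have := hγ.2; rw [mem_ball] at this; linarith
        _ = S + R := by ring
    rw [Set.inter_eq_left.mpr hsub, vol_ball_eq n γ R hR]
  have hsum_lower : (G.card : ℝ≥0∞) * ENNReal.ofReal ((2*R)^n)
      ≤ ∑ γ ∈ Ft, volume (Metric.ball γ R ∩ Metric.ball x (S + R)) := by
    calc (G.card : ℝ≥0∞) * ENNReal.ofReal ((2*R)^n)
        = ∑ γ ∈ G, volume (Metric.ball γ R ∩ Metric.ball x (S + R)) := by
          rw [Finset.sum_congr rfl hterm, Finset.sum_const, nsmul_eq_mul]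
      _ ≤ _ := Finset.sum_le_sum_of_subset hGF
  have hint_upper : ∫⁻ y in Metric.ball x (S + R), ((Γ ∩ Metric.ball y R).ncard : ℝ≥0∞)
      ≤ ENNReal.ofReal C * volume (Metric.ball x (S + R)) := by
    calc ∫⁻ y in Metric.ball x (S + R), ((Γ ∩ Metric.ball y R).ncard : ℝ≥0∞)
        ≤ ∫⁻ _ in Metric.ball x (S + R), ENNReal.ofReal C := by
          apply lintegral_mono
          intro y
          show ((Γ ∩ Metric.ball y R).ncard : ℝ≥0∞) ≤ ENNReal.ofReal C
          rw [← ENNReal.ofReal_natCast]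
          exact ENNReal.ofReal_le_ofReal (hcmp y)
      _ = ENNReal.ofReal C * volume (Metric.ball x (S + R)) := by
          rw [setLIntegral_const]
  have hEN : (G.card : ℝ≥0∞) * ENNReal.ofReal ((2*R)^n)
      ≤ ENNReal.ofReal C * volume (Metric.ball x (S + R)) := by
    calc (G.card : ℝ≥0∞) * ENNReal.ofReal ((2*R)^n)
        ≤ ∑ γ ∈ Ft, volume (Metric.ball γ R ∩ Metric.ball x (S + R)) := hsum_lower
      _ = _ := key.symm
      _ ≤ _ := hint_upper
  have hfin : ENNReal.ofReal C * volume (Metric.ball x (S + R)) ≠ ⊤ :=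
    ENNReal.mul_ne_top ENNReal.ofReal_ne_top measure_ball_lt_top.ne
  have := ENNReal.toReal_mono hfin hEN
  rw [ENNReal.toReal_mul, ENNReal.toReal_mul, ENNReal.toReal_natCast,
    ENNReal.toReal_ofReal (by positivity), ENNReal.toReal_ofReal hC] at this
  have hvol : (volume (Metric.ball x (S + R))).toReal = volBall n (S + R) := by
    rw [vol_ball_eq n x (S + R) (by linarith), volBall_eq n (S + R) (by linarith),
      ENNReal.toReal_ofReal (by positivity)]
  rw [hvol] at this
  have hcard : ((Γ ∩ Metric.ball x S).ncard : ℝ) = (G.card : ℝ) := by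
    rw [hG]; norm_cast
    exact Set.ncard_eq_toFinset_card _ _
  rw [hcard, volBall_eq n R hR]
  exact this

lemma est_lower {n : ℕ} {Γ : Set (Fin n → ℝ)} (hU : UnifDiscrete Γ)
    {R : ℝ} (hR : 0 < R) {C' : ℝ}
    (hcmp : ∀ y : Fin n → ℝ, C' ≤ ((Γ ∩ Metric.ball y R).ncard : ℝ))
    (x : Fin n → ℝ) {S : ℝ} (hS : R < S) :
    C' * volBall n (S - R) ≤ ((Γ ∩ Metric.ball x S).ncard : ℝ) * volBall n R := by
  have key := fubini_count hU x (R := R) (R' := S - R)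
  set Ft := (finite_inter hU x ((S - R) + R)).toFinset with hFt
  have hsum_upper : ∑ γ ∈ Ft, volume (Metric.ball γ R ∩ Metric.ball x (S - R))
      ≤ (Ft.card : ℝ≥0∞) * ENNReal.ofReal ((2*R)^n) := by
    calc ∑ γ ∈ Ft, volume (Metric.ball γ R ∩ Metric.ball x (S - R))
        ≤ ∑ γ ∈ Ft, ENNReal.ofReal ((2*R)^n) := by
          apply Finset.sum_le_sum
          intro γ _
          rw [← vol_ball_eq n γ R hR]
          exact measure_mono Set.inter_subset_left
      _ = (Ft.card : ℝ≥0∞) * ENNReal.ofReal ((2*R)^n) := by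
          rw [Finset.sum_const, nsmul_eq_mul]
  have hint_lower : ENNReal.ofReal C' * volume (Metric.ball x (S - R))
      ≤ ∫⁻ y in Metric.ball x (S - R), ((Γ ∩ Metric.ball y R).ncard : ℝ≥0∞) := by
    calc ENNReal.ofReal C' * volume (Metric.ball x (S - R))
        = ∫⁻ _ in Metric.ball x (S - R), ENNReal.ofReal C' := by rw [setLIntegral_const]
      _ ≤ _ := by
          apply lintegral_mono
          intro y
          show ENNReal.ofReal C' ≤ ((Γ ∩ Metric.ball y R).ncard : ℝ≥0∞)
          rw [← ENNReal.ofReal_natCast]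
          exact ENNReal.ofReal_le_ofReal (hcmp y)
  have hEN : ENNReal.ofReal C' * volume (Metric.ball x (S - R))
      ≤ (Ft.card : ℝ≥0∞) * ENNReal.ofReal ((2*R)^n) :=
    (hint_lower.trans key.le).trans hsum_upper
  have hfin : (Ft.card : ℝ≥0∞) * ENNReal.ofReal ((2*R)^n) ≠ ⊤ :=
    ENNReal.mul_ne_top (ENNReal.natCast_ne_top _) ENNReal.ofReal_ne_top
  have hreal := ENNReal.toReal_mono hfin hEN
  rw [ENNReal.toReal_mul, ENNReal.toReal_mul, ENNReal.toReal_natCast] at hreal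
  have hSR : 0 < S - R := by linarith
  have hvol : (volume (Metric.ball x (S - R))).toReal = volBall n (S - R) := by
    rw [vol_ball_eq n x (S - R) hSR, volBall_eq n (S - R) hSR,
      ENNReal.toReal_ofReal (by positivity)]
  rw [hvol, ENNReal.toReal_ofReal (show (0:ℝ) ≤ (2*R)^n by positivity)] at hreal
  have hcard : (Ft.card : ℝ) = ((Γ ∩ Metric.ball x S).ncard : ℝ) := by
    rw [hFt]
    norm_cast
    rw [← Set.ncard_eq_toFinset_card _ (finite_inter hU x ((S - R) + R)),
      sub_add_cancel]
  rw [hcard] at hreal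
  rw [volBall_eq n R hR]
  calc C' * volBall n (S - R) ≤ (ENNReal.ofReal C').toReal * volBall n (S - R) := by
        apply mul_le_mul_of_nonneg_right _ (by
          rw [volBall_eq n (S - R) hSR]; positivity)
        rw [ENNReal.toReal_ofReal']
        exact le_max_left _ _
    _ ≤ _ := hreal

lemma per_eps {n : ℕ} {Γ : Set (Fin n → ℝ)} (hU : UnifDiscrete Γ)
    {ε R : ℝ} (hε : 0 < ε) (hR : 0 < R)
    (hW : ∀ x y : Fin n → ℝ, ∃ v : Fin n → ℝ,
      ((symmDiff (Metric.ball x R ∩ Γ) ((· - v) '' (Metric.ball y R ∩ Γ))).ncard : ℝ)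
        ≤ ε * volBall n R) :
    ∃ c : ℝ, ∀ᶠ S in (atTop : Filter ℝ), ∀ x : Fin n → ℝ,
      |((Γ ∩ Metric.ball x S).ncard : ℝ) / volBall n S - c| ≤ 2*ε := by
  have hVR : 0 < volBall n R := volBall_pos n R hR
  set VR := volBall n R with hVRdef
  set c₀ := ((Γ ∩ Metric.ball (0 : Fin n → ℝ) R).ncard : ℝ) with hc₀
  set c := c₀ / VR with hc
  refine ⟨c, ?_⟩
  have hc₀VR : c₀ = c * VR := by rw [hc]; field_simp
  have hub : ∀ y, ((Γ ∩ Metric.ball y R).ncard : ℝ) ≤ c₀ + ε * VR :=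
    fun y => count_compare hU hW y 0
  have hlb : ∀ y, c₀ - ε * VR ≤ ((Γ ∩ Metric.ball y R).ncard : ℝ) := by
    intro y
    have := count_compare hU hW 0 y
    linarith
  have hc₀nn : 0 ≤ c₀ := by rw [hc₀]; positivity
  have hupper : ∀ (x : Fin n → ℝ) (S : ℝ), 0 < S →
      ((Γ ∩ Metric.ball x S).ncard : ℝ) / volBall n S ≤ (c + ε) * ((S+R)/S)^n := by
    intro x S hS
    have h := est_upper hU hR (C := c₀ + ε * VR) (by positivity) hub x hS
    have hVS : 0 < volBall n S := volBall_pos n S hS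
    have hN : ((Γ ∩ Metric.ball x S).ncard : ℝ) ≤ (c + ε) * volBall n (S + R) := by
      rw [hc₀VR] at h
      have h2 : ((Γ ∩ Metric.ball x S).ncard : ℝ) * VR
          ≤ ((c + ε) * volBall n (S + R)) * VR := by
        calc ((Γ ∩ Metric.ball x S).ncard : ℝ) * VR
            ≤ (c * VR + ε * VR) * volBall n (S + R) := h
          _ = ((c + ε) * volBall n (S + R)) * VR := by ring
      exact le_of_mul_le_mul_right h2 hVR
    rw [← volBall_ratio n hS (by linarith : (0:ℝ) < S + R)]
    rw [div_le_iff₀ hVS]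
    calc ((Γ ∩ Metric.ball x S).ncard : ℝ) ≤ (c + ε) * volBall n (S + R) := hN
      _ = (c + ε) * (volBall n (S + R) / volBall n S) * volBall n S := by
          field_simp
  have hlower : ∀ (x : Fin n → ℝ) (S : ℝ), R < S →
      (c - ε) * ((S-R)/S)^n ≤ ((Γ ∩ Metric.ball x S).ncard : ℝ) / volBall n S := by
    intro x S hS
    have hS0 : 0 < S := hR.trans hS
    have h := est_lower hU hR (C' := c₀ - ε * VR) hlb x hS
    have hVS : 0 < volBall n S := volBall_pos n S hS0
    have hN : (c - ε) * volBall n (S - R) ≤ ((Γ ∩ Metric.ball x S).ncard : ℝ) := by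
      rw [hc₀VR] at h
      have h2 : ((c - ε) * volBall n (S - R)) * VR
          ≤ ((Γ ∩ Metric.ball x S).ncard : ℝ) * VR := by
        calc ((c - ε) * volBall n (S - R)) * VR
            = (c * VR - ε * VR) * volBall n (S - R) := by ring
          _ ≤ _ := h
      exact le_of_mul_le_mul_right h2 hVR
    rw [← volBall_ratio n hS0 (by linarith : (0:ℝ) < S - R)]
    rw [le_div_iff₀ hVS]
    calc (c - ε) * (volBall n (S - R) / volBall n S) * volBall n S
        = (c - ε) * volBall n (S - R) := by field_simp
      _ ≤ _ := hN
  have T1 : Tendsto (fun S : ℝ => (c + ε) * ((S+R)/S)^n) atTop (𝓝 (c + ε)) := by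
    simpa using (tendsto_ratio_pow n R).const_mul (c + ε)
  have T2 : Tendsto (fun S : ℝ => (c - ε) * ((S-R)/S)^n) atTop (𝓝 (c - ε)) := by
    have := (tendsto_ratio_pow n (-R)).const_mul (c - ε)
    simpa [sub_eq_add_neg] using this
  have E1 : ∀ᶠ S in (atTop : Filter ℝ), (c + ε) * ((S+R)/S)^n ≤ c + 2*ε :=
    (T1.eventually (ge_mem_nhds (by linarith : c + ε < c + 2*ε)))
  have E2 : ∀ᶠ S in (atTop : Filter ℝ), c - 2*ε ≤ (c - ε) * ((S-R)/S)^n :=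
    (T2.eventually (le_mem_nhds (by linarith : c - 2*ε < c - ε)))
  filter_upwards [E1, E2, eventually_gt_atTop R] with S h1 h2 h3
  intro x
  have hS0 : 0 < S := hR.trans h3
  rw [abs_le]
  constructor
  · have := hlower x S h3
    linarith
  · have := hupper x S hS0
    linarith

end Auxiliary

theorem stmt4 {n : ℕ} (Γ : Set (Fin n → ℝ)) (hΓ : IsWAP Γ) :
    ∃ D : ℝ, ∀ ε > (0:ℝ), ∃ Rε > (0:ℝ), ∀ R > Rε, ∀ x : Fin n → ℝ,
      |((Γ ∩ Metric.ball x R).ncard : ℝ) / volBall n R - D| < ε := by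
  have hU : UnifDiscrete Γ := hΓ.1.1
  have hex : ∀ k : ℕ, ∃ c : ℝ, ∀ᶠ S in (atTop : Filter ℝ), ∀ x : Fin n → ℝ,
      |((Γ ∩ Metric.ball x S).ncard : ℝ) / volBall n S - c| ≤ 2 * (1/((k:ℝ)+1)) := by
    intro k
    have hεk : (0:ℝ) < 1/((k:ℝ)+1) := by positivity
    obtain ⟨R, hR, hW⟩ := hΓ.2 _ hεk
    exact per_eps hU hεk hR hW
  choose a ha using hex
  have hpair : ∀ j k : ℕ, |a j - a k| ≤ 2*(1/((j:ℝ)+1)) + 2*(1/((k:ℝ)+1)) := by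
    intro j k
    obtain ⟨S, hSj, hSk⟩ := ((ha j).and (ha k)).exists
    have h1 := hSj 0
    have h2 := hSk 0
    set d := ((Γ ∩ Metric.ball (0 : Fin n → ℝ) S).ncard : ℝ) / volBall n S with hd
    calc |a j - a k| ≤ |a j - d| + |d - a k| := abs_sub_le _ _ _
      _ ≤ 2*(1/((j:ℝ)+1)) + 2*(1/((k:ℝ)+1)) := by
          rw [abs_sub_comm (a j) d]
          exact add_le_add h1 h2
  have hcauchy : CauchySeq a := by
    apply cauchySeq_of_le_tendsto_0 (fun N : ℕ => 4*(1/((N:ℝ)+1)))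
    · intro j k N hj hk
      rw [Real.dist_eq]
      have hmj : (1:ℝ)/((j:ℝ)+1) ≤ 1/((N:ℝ)+1) := by
        apply one_div_le_one_div_of_le (by positivity)
        exact_mod_cast Nat.succ_le_succ hj
      have hmk : (1:ℝ)/((k:ℝ)+1) ≤ 1/((N:ℝ)+1) := by
        apply one_div_le_one_div_of_le (by positivity)
        exact_mod_cast Nat.succ_le_succ hk
      have := hpair j k
      linarith
    · have h0 : Tendsto (fun N : ℕ => (1:ℝ)/((N:ℝ)+1)) atTop (nhds 0) :=
        tendsto_one_div_add_atTop_nhds_zero_nat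
      simpa using h0.const_mul 4
  obtain ⟨D, hD⟩ := cauchySeq_tendsto_of_complete hcauchy
  have hDk : ∀ k : ℕ, |a k - D| ≤ 2*(1/((k:ℝ)+1)) := by
    intro k
    have hj : Tendsto (fun j : ℕ => |a j - a k|) atTop (nhds |D - a k|) :=
      ((hD.sub_const (a k)).abs)
    have hlim : Tendsto (fun j : ℕ => 2*(1/((j:ℝ)+1)) + 2*(1/((k:ℝ)+1))) atTop
        (nhds (2*0 + 2*(1/((k:ℝ)+1)))) := by
      exact ((tendsto_one_div_add_atTop_nhds_zero_nat.const_mul 2).add_const _)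
    have hle := le_of_tendsto_of_tendsto' hj hlim (fun j => hpair j k)
    rw [abs_sub_comm (a k) D]
    linarith
  refine ⟨D, ?_⟩
  intro ε hε
  obtain ⟨k, hk⟩ := exists_nat_gt (8/ε)
  have h8 : 8 < ε * k := by
    have := (div_lt_iff₀ hε).mp hk
    linarith
  have h4 : 4*(1/((k:ℝ)+1)) < ε := by
    rw [mul_one_div, div_lt_iff₀ (by positivity : (0:ℝ) < (k:ℝ)+1)]
    nlinarith
  obtain ⟨S₀, hS₀⟩ := eventually_atTop.mp (ha k)
  refine ⟨max S₀ 1, lt_of_lt_of_le zero_lt_one (le_max_right _ _), ?_⟩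
  intro S hS x
  have hSge : S₀ ≤ S := le_trans (le_max_left _ _) hS.le
  have h1 := hS₀ S hSge x
  have h2 := hDk k
  calc |((Γ ∩ Metric.ball x S).ncard : ℝ) / volBall n S - D|
      ≤ |((Γ ∩ Metric.ball x S).ncard : ℝ) / volBall n S - a k| + |a k - D| :=
        abs_sub_le _ _ _
    _ ≤ 2*(1/((k:ℝ)+1)) + 2*(1/((k:ℝ)+1)) := add_le_add h1 h2
    _ = 4*(1/((k:ℝ)+1)) := by ring
    _ < ε := h4
end

section
/- Let Γ ⊆ ℝⁿ be a model set modelled on a lattice Λ ⊆ ℝ^{m+n} and window W ⊆ ℝᵐ, and let A ∈ GLₙ(ℝ). Then the set Â(Γ) = {π(Aγ) : γ ∈ Γ} is again a model set: if Λ is spanned by the columns of the block matrix with blocks B₁ (top, m rows) and B₂ (bottom, n rows), then Â(Γ) is the model set modelled on the window W' = W × (−1/2, 1/2]ⁿ ⊆ ℝ^{m+n} and the lattice in ℝ^{(m+n)+n} spanned by the block matrix with rows (B₁, 0), (A B₂, −Id), (0, Id). -/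
def proj1 (m n : ℕ) (v : Fin (m + n) → ℝ) : Fin m → ℝ := fun i => v (Fin.castAdd n i)

def proj2 (m n : ℕ) (v : Fin (m + n) → ℝ) : Fin n → ℝ := fun i => v (Fin.natAdd m i)

def IsLattice {d : ℕ} (Λ : Set (Fin d → ℝ)) : Prop :=
  ∃ b : Module.Basis (Fin d) ℝ (Fin d → ℝ),
    Λ = ((Submodule.span ℤ (Set.range ⇑b) : Submodule ℤ (Fin d → ℝ)) : Set (Fin d → ℝ))

def ModelSet (m n : ℕ) (Λ : Set (Fin (m + n) → ℝ)) (W : Set (Fin m → ℝ)) :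
    Set (Fin n → ℝ) :=
  {x | ∃ l ∈ Λ, proj1 m n l ∈ W ∧ proj2 m n l = x}

noncomputable def roundP (x : ℝ) : ℤ := ⌈x - 1/2⌉

noncomputable def roundPi {n : ℕ} (x : Fin n → ℝ) : Fin n → ℝ := fun i => (roundP (x i) : ℝ)

noncomputable def discr {n : ℕ} (A : Matrix (Fin n) (Fin n) ℝ) (x : Fin n → ℝ) :
    Fin n → ℝ :=
  roundPi (A.mulVec x)

def intLat (n : ℕ) : Set (Fin n → ℝ) := {x | ∀ i, ∃ k : ℤ, x i = (k : ℝ)}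


lemma roundP_eq_iff (x : ℝ) (k : ℤ) : roundP x = k ↔ x - k ∈ Set.Ioc (-(1:ℝ)/2) (1/2) := by
  unfold roundP
  rw [Int.ceil_eq_iff]
  constructor
  · rintro ⟨h1, h2⟩; constructor <;> linarith
  · rintro ⟨h1, h2⟩; constructor <;> linarith

lemma proj1_append {m n : ℕ} (f : Fin m → ℝ) (g : Fin n → ℝ) :
    proj1 m n (Fin.append f g) = f := funext fun i => Fin.append_left f g i

lemma proj2_append {m n : ℕ} (f : Fin m → ℝ) (g : Fin n → ℝ) :
    proj2 m n (Fin.append f g) = g := funext fun i => Fin.append_right f g i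

theorem stmt7 (m n : ℕ) (Λ : Set (Fin (m + n) → ℝ)) (W : Set (Fin m → ℝ))
    (B : Matrix (Fin (m + n)) (Fin (m + n)) ℝ) (hB : IsUnit B.det)
    (hΛ : Λ = {z | ∃ u : Fin (m + n) → ℤ, z = B.mulVec (fun i => (u i : ℝ))})
    (A : Matrix (Fin n) (Fin n) ℝ) (hA : IsUnit A.det)
    (Γ : Set (Fin n → ℝ)) (hΓ : Γ = ModelSet m n Λ W) :
    discr A '' Γ =
      ModelSet (m + n) n
        {z : Fin ((m + n) + n) → ℝ | ∃ (u : Fin (m + n) → ℤ) (w : Fin n → ℤ),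
          z = Fin.append
                (Fin.append
                  (fun i : Fin m => B.mulVec (fun i' => (u i' : ℝ)) (Fin.castAdd n i))
                  (fun i : Fin n =>
                    A.mulVec (fun j => B.mulVec (fun i' => (u i' : ℝ)) (Fin.natAdd m j)) i
                      - (w i : ℝ)))
                (fun i : Fin n => (w i : ℝ))}
        {w' : Fin (m + n) → ℝ | proj1 m n w' ∈ W ∧
          ∀ i, proj2 m n w' i ∈ Set.Ioc (-(1:ℝ)/2) (1/2)} := by
  subst hΓ hΛ
  ext x
  constructor
  · rintro ⟨γ, ⟨l, ⟨u, rfl⟩, hW, rfl⟩, rfl⟩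
    set c : Fin (m+n) → ℝ := B.mulVec (fun i => (u i : ℝ)) with hc
    refine ⟨_, ⟨u, fun i => roundP (A.mulVec (proj2 m n c) i), rfl⟩, ⟨?_, ?_⟩, ?_⟩
    · rw [proj1_append, proj1_append]
      exact hW
    · intro i
      rw [proj1_append, proj2_append]
      rw [show (fun j => c (Fin.natAdd m j)) = proj2 m n c from rfl]
      have := (roundP_eq_iff (A.mulVec (proj2 m n c) i)
        (roundP (A.mulVec (proj2 m n c) i))).mp rfl
      simpa using this
    · rw [proj2_append]
      funext i
      simp [discr, roundPi]
  · rintro ⟨z, ⟨u, w, rfl⟩, ⟨hW, hbox⟩, rfl⟩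
    set c : Fin (m+n) → ℝ := B.mulVec (fun i => (u i : ℝ)) with hc
    refine ⟨proj2 m n c, ⟨c, ⟨u, rfl⟩, ?_, rfl⟩, ?_⟩
    · rw [proj1_append, proj1_append] at hW
      exact hW
    · rw [proj2_append]
      funext i
      have hb := hbox i
      rw [proj1_append, proj2_append] at hb
      simp only [discr, roundPi]
      rw [show (fun j => c (Fin.natAdd m j)) = proj2 m n c from rfl] at hb
      norm_cast
      exact (roundP_eq_iff _ _).mpr hb
end

section
/- Let A ∈ GLₙ(ℝ) and let I_ℚ(A) be the set of row indices i such that all entries a_{i,j} (1 ≤ j ≤ n) are rational. For every ε > 0 there exist δ > 0 and R₀ > 0 such that for every w ∈ ℝⁿ with ‖w‖∞ < δ and wᵢ = 0 for all i ∈ I_ℚ(A), and every R ≥ R₀, one has D_R⁺(π(Aℤⁿ) Δ π(Aℤⁿ + w)) ≤ ε. -/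
open MeasureTheory Metric Set Filter

def IQ {n : ℕ} (A : Matrix (Fin n) (Fin n) ℝ) : Set (Fin n) :=
  {i | ∀ j, ∃ q : ℚ, A i j = (q : ℝ)}

private lemma toNat_cast_le {m : ℤ} {B : ℝ} (h : (m:ℝ) ≤ B) (hB : 0 ≤ B) :
    ((m.toNat : ℕ) : ℝ) ≤ B := by
  rcases le_or_gt m 0 with h0 | h0
  · simp [Int.toNat_of_nonpos h0]; exact hB
  · have : ((m.toNat : ℤ) : ℝ) ≤ B := by rw [Int.toNat_of_nonneg h0.le]; exact h
    exact_mod_cast this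

private lemma abs_roundP_sub_le (x : ℝ) : |(roundP x : ℝ) - x| ≤ 1/2 := by
  unfold roundP
  have h1 := Int.le_ceil (x - 1/2)
  have h2 := Int.ceil_lt_add_one (x - 1/2)
  rw [abs_le]; constructor <;> linarith

private lemma roundP_change {t w δ : ℝ} (hw : |w| < δ) (h : roundP (t + w) ≠ roundP t) :
    ∃ k : ℤ, |t - 1/2 - (k:ℝ)| < δ := by
  unfold roundP at h
  have hww : w ≤ |w| := le_abs_self w
  have hww' : -w ≤ |w| := neg_le_abs w
  rcases lt_or_gt_of_ne h with hlt | hlt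
  · refine ⟨⌈t + w - 1/2⌉, ?_⟩
    have h1 : t + w - 1/2 ≤ (⌈t + w - 1/2⌉:ℝ) := Int.le_ceil _
    have h2 : (⌈t + w - 1/2⌉:ℝ) ≤ (⌈t - 1/2⌉:ℝ) - 1 := by
      have h := Int.lt_iff_add_one_le.mp hlt
      have h' : ((⌈t + w - 1/2⌉ + 1 : ℤ):ℝ) ≤ (⌈t - 1/2⌉:ℝ) := by exact_mod_cast h
      push_cast at h'; linarith
    have h3 : (⌈t - 1/2⌉:ℝ) < (t - 1/2) + 1 := Int.ceil_lt_add_one _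
    rw [abs_lt]; constructor <;> linarith
  · refine ⟨⌈t - 1/2⌉, ?_⟩
    have h1 : t - 1/2 ≤ (⌈t - 1/2⌉:ℝ) := Int.le_ceil _
    have h2 : (⌈t - 1/2⌉:ℝ) ≤ (⌈t + w - 1/2⌉:ℝ) - 1 := by
      have := Int.lt_iff_add_one_le.mp hlt
      have : ((⌈t - 1/2⌉ + 1 : ℤ):ℝ) ≤ (⌈t + w - 1/2⌉:ℝ) := by exact_mod_cast this
      push_cast at this; linarith
    have h3 : (⌈t + w - 1/2⌉:ℝ) < (t + w - 1/2) + 1 := Int.ceil_lt_add_one _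
    rw [abs_lt]; constructor <;> linarith

private lemma exists_gap {α : ℝ} (hα : Irrational α) (Q : ℕ) :
    ∃ δ : ℝ, 0 < δ ∧ δ ≤ 1/2 ∧
      ∀ k : ℤ, k ≠ 0 → |k| ≤ (Q:ℤ) → ∀ m : ℤ, 2*δ ≤ |α * k - m| := by
  classical
  set F : Finset ℤ := (Finset.Icc (-(Q:ℤ)) Q).erase 0 with hF
  rcases F.eq_empty_or_nonempty with hFe | hFne
  · refine ⟨1/2, by norm_num, le_refl _, fun k hk hkQ m => ?_⟩
    exfalso
    have : k ∈ F := by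
      rw [hF, Finset.mem_erase, Finset.mem_Icc]
      exact ⟨hk, neg_le_of_abs_le hkQ, le_of_abs_le hkQ⟩
    rw [hFe] at this; exact absurd this (Finset.notMem_empty k)
  · set G := F.image (fun k : ℤ => |α * k - round (α * k)|) with hG
    have hGne : G.Nonempty := hFne.image _
    set d : ℝ := G.min' hGne with hd
    have hdpos : 0 < d := by
      have hmem := Finset.min'_mem G hGne
      rcases Finset.mem_image.mp hmem with ⟨k, hkF, hdk⟩
      have hk0 : k ≠ 0 := (Finset.mem_erase.mp hkF).1
      have hirr : Irrational (α * k) := by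
        have := hα.intCast_mul hk0
        rwa [mul_comm] at this
      have hne : α * k ≠ (round (α * k) : ℝ) := hirr.ne_int _
      rw [hd, ← hdk]
      exact abs_pos.mpr (sub_ne_zero.mpr hne)
    refine ⟨min (1/2) (d/2), by positivity, min_le_left _ _, fun k hk hkQ m => ?_⟩
    have hkF : k ∈ F := by
      rw [hF, Finset.mem_erase, Finset.mem_Icc]
      exact ⟨hk, neg_le_of_abs_le hkQ, le_of_abs_le hkQ⟩
    have h1 : d ≤ |α * k - round (α * k)| :=
      Finset.min'_le _ _ (Finset.mem_image_of_mem _ hkF)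
    have h2 : |α * k - (round (α * k) : ℝ)| ≤ |α * k - m| := round_le _ _
    have h4 : min (1/2) (d/2) ≤ d/2 := min_le_right _ _
    linarith

private lemma nat_div_close {a b q : ℕ} (h : a / (q+1) = b / (q+1)) : a < b + (q+1) := by
  have h1 := Nat.div_add_mod a (q+1)
  have h2 := Nat.div_add_mod b (q+1)
  rw [h] at h1
  set K := (q+1) * (b/(q+1)) with hK
  have h3 : a % (q+1) < q+1 := Nat.mod_lt _ (Nat.succ_pos q)
  have h4 : b % (q+1) < q+1 := Nat.mod_lt _ (Nat.succ_pos q)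
  omega

private lemma ncard_biUnion_le {α ι : Type*} (s : Finset ι) (t : ι → Set α) :
    (⋃ i ∈ s, t i).ncard ≤ ∑ i ∈ s, (t i).ncard := by
  classical
  induction s using Finset.induction_on with
  | empty => simp
  | @insert a s ha ih =>
      rw [Finset.set_biUnion_insert, Finset.sum_insert ha]
      exact (Set.ncard_union_le _ _).trans (add_le_add le_rfl ih)

private lemma box_finite {n : ℕ} (lo hi : Fin n → ℤ) :
    {v : Fin n → ℤ | ∀ k, lo k ≤ v k ∧ v k ≤ hi k}.Finite := by
  apply Set.Finite.subset (Set.finite_Icc lo hi)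
  intro v hv
  rw [Set.mem_Icc]
  exact ⟨fun k => (hv k).1, fun k => (hv k).2⟩

private lemma count_bad {n : ℕ} (a : Fin n → ℝ) (j : Fin n) (lo hi : Fin n → ℤ)
    (Q : ℕ) (δ : ℝ)
    (hgap : ∀ k : ℤ, k ≠ 0 → |k| ≤ (Q:ℤ) → ∀ m : ℤ, 2*δ ≤ |a j * k - m|) :
    {v : Fin n → ℤ | (∀ k, lo k ≤ v k ∧ v k ≤ hi k) ∧
        ∃ m : ℤ, |(∑ k, a k * (v k : ℝ)) - 1/2 - (m:ℝ)| < δ}.ncard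
      ≤ ((hi j - lo j).toNat / (Q+1) + 1) *
        ∏ k ∈ Finset.univ.erase j, (hi k + 1 - lo k).toNat := by
  classical
  set V : Set (Fin n → ℤ) := {v | (∀ k, lo k ≤ v k ∧ v k ≤ hi k) ∧
      ∃ m : ℤ, |(∑ k, a k * (v k : ℝ)) - 1/2 - (m:ℝ)| < δ} with hV
  set Φ : (Fin n → ℤ) → (Fin n → ℤ) :=
    fun v k => if k = j then (((v j - lo j).toNat / (Q+1) : ℕ) : ℤ) else v k with hΦ
  have hinj : Set.InjOn Φ V := by
    intro v hv v' hv' heq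
    have hoff : ∀ k, k ≠ j → v k = v' k := by
      intro k hk
      have := congrFun heq k
      simpa [hΦ, hk] using this
    have hjj : v j = v' j := by
      by_contra hne
      have hq : (v j - lo j).toNat / (Q+1) = (v' j - lo j).toNat / (Q+1) := by
        have := congrFun heq j
        simp only [hΦ, if_pos rfl] at this
        exact_mod_cast this
      have hb1 : lo j ≤ v j := (hv.1 j).1
      have hb2 : lo j ≤ v' j := (hv'.1 j).1
      have hc1 := nat_div_close hq
      have hc2 := nat_div_close hq.symm
      have hclose : |v j - v' j| ≤ (Q:ℤ) := by
        rw [abs_le]; omega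
      obtain ⟨m, hm⟩ := hv.2
      obtain ⟨m', hm'⟩ := hv'.2
      have hsum : (∑ k, a k * (v k : ℝ)) - (∑ k, a k * (v' k : ℝ))
          = a j * ((v j - v' j : ℤ) : ℝ) := by
        rw [← Finset.sum_sub_distrib, Finset.sum_eq_single j]
        · push_cast; ring
        · intro k _ hk; rw [hoff k hk]; ring
        · intro h; exact absurd (Finset.mem_univ j) h
      have hgk := hgap (v j - v' j) (sub_ne_zero.mpr hne) hclose (m - m')
      have habs : |a j * ((v j - v' j : ℤ):ℝ) - ((m - m' : ℤ):ℝ)| < 2*δ := by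
        have h3 : a j * ((v j - v' j : ℤ):ℝ) - ((m - m':ℤ):ℝ)
            = ((∑ k, a k * (v k : ℝ)) - 1/2 - m) - ((∑ k, a k * (v' k : ℝ)) - 1/2 - m') := by
          rw [← hsum]; push_cast; ring
        calc |a j * ((v j - v' j : ℤ):ℝ) - ((m - m' : ℤ):ℝ)|
            = |((∑ k, a k * (v k : ℝ)) - 1/2 - m) - ((∑ k, a k * (v' k : ℝ)) - 1/2 - m')| := by
              rw [h3]
          _ ≤ |(∑ k, a k * (v k : ℝ)) - 1/2 - m| + |(∑ k, a k * (v' k : ℝ)) - 1/2 - m'| :=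
              abs_sub _ _
          _ < δ + δ := add_lt_add hm hm'
          _ = 2*δ := by ring
      linarith
    funext k
    by_cases hk : k = j
    · rw [hk]; exact hjj
    · exact hoff k hk
  set t : Fin n → Finset ℤ := fun k =>
    if k = j then Finset.Icc 0 ((((hi j - lo j).toNat / (Q+1) : ℕ)):ℤ) else Finset.Icc (lo k) (hi k) with ht
  have himg : Φ '' V ⊆ ↑(Fintype.piFinset t) := by
    rintro _ ⟨v, hv, rfl⟩
    rw [Finset.mem_coe, Fintype.mem_piFinset]
    intro k
    by_cases hk : k = j
    · subst hk
      simp only [hΦ, ht, if_pos rfl, Finset.mem_Icc]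
      refine ⟨Int.natCast_nonneg _, ?_⟩
      have hle : (v k - lo k).toNat ≤ (hi k - lo k).toNat :=
        Int.toNat_le_toNat (by have := (hv.1 k).2; omega)
      exact_mod_cast Nat.div_le_div_right hle
    · simp only [hΦ, ht, if_neg hk, Finset.mem_Icc]
      exact hv.1 k
  calc V.ncard = (Φ '' V).ncard := (Set.ncard_image_of_injOn hinj).symm
    _ ≤ (Fintype.piFinset t : Set (Fin n → ℤ)).ncard :=
        Set.ncard_le_ncard himg (Finset.finite_toSet _)
    _ = (Fintype.piFinset t).card := Set.ncard_coe_finset _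
    _ = ∏ k, (t k).card := Fintype.card_piFinset t
    _ = (t j).card * ∏ k ∈ Finset.univ.erase j, (t k).card :=
        (Finset.mul_prod_erase Finset.univ _ (Finset.mem_univ j)).symm
    _ = ((hi j - lo j).toNat / (Q+1) + 1) * ∏ k ∈ Finset.univ.erase j, (hi k + 1 - lo k).toNat := by
        congr 1
        · rw [ht]; simp only [if_pos rfl, ite_true, eq_self_iff_true]
          rw [Int.card_Icc]
          generalize (hi j - lo j).toNat / (Q+1) = e
          omega
        · refine Finset.prod_congr rfl fun k hk => ?_
          have hkj : k ≠ j := (Finset.mem_erase.mp hk).1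
          rw [ht]; simp only [if_neg hkj]
          exact Int.card_Icc _ _

set_option maxHeartbeats 4000000 in
theorem stmt12 {n : ℕ} (A : Matrix (Fin n) (Fin n) ℝ) (hA : IsUnit A.det)
    (ε : ℝ) (hε : 0 < ε) :
    ∃ δ > (0:ℝ), ∃ R₀ > (0:ℝ), ∀ w : Fin n → ℝ, ‖w‖ < δ → (∀ i ∈ IQ A, w i = 0) →
      ∀ R ≥ R₀,
        DRplus R {y | ∃ v : Fin n → ℤ, y = roundPi (A.mulVec (fun j => (v j : ℝ)))}
          {y | ∃ v : Fin n → ℤ, y = roundPi (A.mulVec (fun j => (v j : ℝ)) + w)} ≤ ε := by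
  classical
  set B := A⁻¹ with hB
  have hBA : B * A = 1 := Matrix.nonsing_inv_mul A hA
  set C : ℝ := 1 + ∑ k : Fin n, ∑ l : Fin n, |B k l| with hC
  have hCs : 0 ≤ ∑ k : Fin n, ∑ l : Fin n, |B k l| :=
    Finset.sum_nonneg fun _ _ => Finset.sum_nonneg fun _ _ => abs_nonneg _
  have hC1 : (1:ℝ) ≤ C := by rw [hC]; linarith
  have hC0 : (0:ℝ) < C := lt_of_lt_of_le one_pos hC1
  have hBbound : ∀ (y : Fin n → ℝ) (M : ℝ), 0 ≤ M → (∀ l, |y l| ≤ M) →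
      ∀ k, |B.mulVec y k| ≤ C * M := by
    intro y M hM hy k
    have h1 : |B.mulVec y k| ≤ ∑ l, |B k l| * M := by
      rw [Matrix.mulVec, dotProduct]
      refine (Finset.abs_sum_le_sum_abs _ _).trans (Finset.sum_le_sum fun l _ => ?_)
      rw [abs_mul]
      exact mul_le_mul_of_nonneg_left (hy l) (abs_nonneg _)
    have h2 : (∑ l, |B k l| * M) = (∑ l, |B k l|) * M := (Finset.sum_mul _ _ _).symm
    have h3 : (∑ l, |B k l|) * M ≤ C * M := by
      refine mul_le_mul_of_nonneg_right ?_ hM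
      have h4 : ∑ l, |B k l| ≤ ∑ k' : Fin n, ∑ l, |B k' l| :=
        Finset.single_le_sum (f := fun k' => ∑ l, |B k' l|)
          (fun k' _ => Finset.sum_nonneg fun l _ => abs_nonneg _) (Finset.mem_univ k)
      rw [hC]; linarith
    linarith [h2 ▸ h1]
  set K : ℝ := 4*C + 2 with hK
  have hK1 : (1:ℝ) ≤ K := by rw [hK]; linarith
  have hKpos : (0:ℝ) < K := lt_of_lt_of_le one_pos hK1
  have hKn : (0:ℝ) < K^n := pow_pos hKpos n
  set Q : ℕ := ⌈4*((n:ℝ)+1)*K^n / (ε * 2^n)⌉₊ with hQdef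
  have hQge : 4*((n:ℝ)+1)*K^n / (ε * 2^n) ≤ (Q:ℝ) + 1 :=
    (Nat.le_ceil _).trans (by linarith)
  have hQ0 : (0:ℝ) ≤ (Q:ℝ) := Nat.cast_nonneg Q
  have hQ1 : (0:ℝ) < (Q:ℝ)+1 := by positivity
  have Hrow : ∀ i : Fin n, ∃ j : Fin n, ∃ d : ℝ, 0 < d ∧ d ≤ 1/2 ∧
      (i ∉ IQ A → ∀ k : ℤ, k ≠ 0 → |k| ≤ (Q:ℤ) → ∀ m : ℤ, 2*d ≤ |A i j * k - m|) := by
    intro i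
    by_cases hi : i ∈ IQ A
    · exact ⟨i, 1/2, by norm_num, le_refl _, fun h => absurd hi h⟩
    · have hex : ∃ j, Irrational (A i j) := by
        rw [IQ, Set.mem_setOf_eq] at hi
        push_neg at hi
        obtain ⟨j, hj⟩ := hi
        refine ⟨j, ?_⟩
        rw [Irrational]
        rintro ⟨q, hq⟩
        exact hj q hq.symm
      obtain ⟨j, hj⟩ := hex
      obtain ⟨d, hd0, hd12, hdgap⟩ := exists_gap hj Q
      exact ⟨j, d, hd0, hd12, fun _ => hdgap⟩
  choose jf df hdf0 hdf12 hgapf using Hrow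
  set Fδ : Finset ℝ := insert (1/2) (Finset.image df Finset.univ) with hFδ
  have hFδne : Fδ.Nonempty := ⟨1/2, Finset.mem_insert_self _ _⟩
  set δ : ℝ := Fδ.min' hFδne with hδdef
  have hδpos : 0 < δ := by
    rw [hδdef, Finset.lt_min'_iff]
    intro b hb
    rw [hFδ, Finset.mem_insert] at hb
    rcases hb with rfl | hb
    · norm_num
    · obtain ⟨i, _, rfl⟩ := Finset.mem_image.mp hb
      exact hdf0 i
  have hδhalf : δ ≤ 1/2 := Finset.min'_le _ _ (Finset.mem_insert_self _ _)
  have hδdf : ∀ i, δ ≤ df i := fun i =>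
    Finset.min'_le _ _ (Finset.mem_insert_of_mem (Finset.mem_image_of_mem _ (Finset.mem_univ i)))
  refine ⟨δ, hδpos, (Q:ℝ)+1, by positivity, ?_⟩
  intro w hw hwIQ R hR
  have hR1 : (1:ℝ) ≤ R := by linarith
  have hR0 : (0:ℝ) < R := lt_of_lt_of_le one_pos hR1
  have hwl : ∀ l, |w l| < δ := fun l =>
    lt_of_le_of_lt (by rw [← Real.norm_eq_abs]; exact norm_le_pi_norm w l) hw
  set Γ : Set (Fin n → ℝ) :=
    {y | ∃ v : Fin n → ℤ, y = roundPi (A.mulVec (fun j => (v j : ℝ)))} with hΓ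
  set Γ' : Set (Fin n → ℝ) :=
    {y | ∃ v : Fin n → ℤ, y = roundPi (A.mulVec (fun j => (v j : ℝ)) + w)} with hΓ'
  have hvol : volBall n R = (2*R)^n := by
    unfold volBall
    rw [Real.volume_pi_ball _ hR0, ENNReal.toReal_ofReal (by positivity)]
    rw [Fintype.card_fin]
  unfold DRplus
  refine Real.iSup_le (fun x => ?_) hε.le
  rw [hvol, div_le_iff₀ (by positivity)]
  set x0 : Fin n → ℝ := B.mulVec x with hx0
  set T : ℝ := C * (R + 1) with hT
  have hTpos : (0:ℝ) < T := by rw [hT]; positivity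
  set lo : Fin n → ℤ := fun k => ⌈x0 k - T⌉ with hlo
  set hi : Fin n → ℤ := fun k => ⌊x0 k + T⌋ with hhi
  set Vs : Fin n → Set (Fin n → ℤ) := fun i => {v | (∀ k, lo k ≤ v k ∧ v k ≤ hi k) ∧
      ∃ m : ℤ, |(∑ k, A i k * (v k : ℝ)) - 1/2 - (m:ℝ)| < δ} with hVs
  set f : (Fin n → ℤ) → (Fin n → ℝ) := fun v => roundPi (A.mulVec (fun j => (v j:ℝ))) with hf
  set g : (Fin n → ℤ) → (Fin n → ℝ) := fun v => roundPi (A.mulVec (fun j => (v j:ℝ)) + w) with hg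
  set Bad : Set (Fin n → ℤ) :=
    {v | (f v ∈ Metric.ball x R ∨ g v ∈ Metric.ball x R) ∧ g v ≠ f v} with hBad
  set S : Finset (Fin n) := Finset.univ.filter (fun i => i ∉ IQ A) with hS
  have hBadsub : Bad ⊆ ⋃ i ∈ S, Vs i := by
    intro v hv
    obtain ⟨hball, hne⟩ := hv
    have hcoord : ∀ l, |A.mulVec (fun j => (v j : ℝ)) l - x l| ≤ R + 1 := by
      intro l
      have hr := abs_roundP_sub_le ((A.mulVec fun j => (v j:ℝ)) l)
      rcases hball with hb | hb
      · have h2 := dist_le_pi_dist (f v) x l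
        rw [Real.dist_eq] at h2
        have h3 := mem_ball.mp hb
        have hfl : f v l = ((roundP ((A.mulVec fun j => (v j:ℝ)) l)):ℝ) := rfl
        rw [hfl] at h2
        have h4 : |((roundP ((A.mulVec fun j => (v j:ℝ)) l)):ℝ) - x l| < R := lt_of_le_of_lt h2 h3
        have h5 := abs_sub_le (A.mulVec (fun j => (v j:ℝ)) l)
          ((roundP ((A.mulVec fun j => (v j:ℝ)) l)):ℝ) (x l)
        rw [abs_sub_comm] at hr
        linarith
      · have h2 := dist_le_pi_dist (g v) x l
        rw [Real.dist_eq] at h2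
        have h3 := mem_ball.mp hb
        have hr2 := abs_roundP_sub_le ((A.mulVec fun j => (v j:ℝ)) l + w l)
        have hgl : g v l = ((roundP ((A.mulVec fun j => (v j:ℝ)) l + w l)):ℝ) := rfl
        rw [hgl] at h2
        have h4 : |((roundP ((A.mulVec fun j => (v j:ℝ)) l + w l)):ℝ) - x l| < R :=
          lt_of_le_of_lt h2 h3
        have h5 := abs_sub_le (A.mulVec (fun j => (v j:ℝ)) l + w l)
          ((roundP ((A.mulVec fun j => (v j:ℝ)) l + w l)):ℝ) (x l)
        rw [abs_sub_comm] at hr2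
        have h6 : |A.mulVec (fun j => (v j:ℝ)) l + w l - x l| < R + 1/2 := by linarith
        have h7 := hwl l
        have he : A.mulVec (fun j => (v j:ℝ)) l - x l
            = (A.mulVec (fun j => (v j:ℝ)) l + w l - x l) + (-(w l)) := by ring
        rw [he]
        refine le_trans (abs_add_le _ _) ?_
        rw [abs_neg]
        linarith
    have hbox : ∀ k, lo k ≤ v k ∧ v k ≤ hi k := by
      intro k
      have hrec : B.mulVec (A.mulVec (fun j => (v j:ℝ))) = (fun j => (v j:ℝ)) := by
        rw [Matrix.mulVec_mulVec, hBA, Matrix.one_mulVec]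
      have hvk : (v k : ℝ) - x0 k = B.mulVec (A.mulVec (fun j => (v j:ℝ)) - x) k := by
        rw [Matrix.mulVec_sub, Pi.sub_apply, hrec, hx0]
      have hb2 := hBbound (A.mulVec (fun j => (v j:ℝ)) - x) (R+1) (by linarith) (fun l => hcoord l) k
      rw [← hvk, abs_le] at hb2
      constructor
      · show (⌈x0 k - T⌉ : ℤ) ≤ v k
        rw [Int.ceil_le]
        push_cast
        rw [hT]
        linarith [hb2.1]
      · show v k ≤ (⌊x0 k + T⌋ : ℤ)
        rw [Int.le_floor]
        push_cast
        rw [hT]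
        linarith [hb2.2]
    have hex : ∃ i, roundP ((A.mulVec fun j => (v j:ℝ)) i + w i)
        ≠ roundP ((A.mulVec fun j => (v j:ℝ)) i) := by
      by_contra hcon
      push_neg at hcon
      apply hne
      funext i
      show ((roundP ((A.mulVec fun j => (v j:ℝ)) i + w i)):ℝ)
          = ((roundP ((A.mulVec fun j => (v j:ℝ)) i)):ℝ)
      exact congrArg _ (hcon i)
    obtain ⟨i, hi2⟩ := hex
    have hiIQ : i ∉ IQ A := fun hmem => hi2 (by rw [hwIQ i hmem, add_zero])
    obtain ⟨m, hm⟩ := roundP_change (hwl i) hi2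
    have hmv : A.mulVec (fun j => (v j:ℝ)) i = ∑ k, A i k * (v k : ℝ) := by
      rw [Matrix.mulVec, dotProduct]
    rw [hmv] at hm
    exact Set.mem_iUnion₂.mpr ⟨i, Finset.mem_filter.mpr ⟨Finset.mem_univ i, hiIQ⟩, hbox, m, hm⟩
  have hVfin : ∀ i, (Vs i).Finite := fun i => (box_finite lo hi).subset (fun v hv => hv.1)
  have hUfin : (⋃ i ∈ S, Vs i).Finite :=
    Set.Finite.subset (Set.finite_iUnion hVfin) (Set.iUnion₂_subset fun i _ => Set.subset_iUnion _ i)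
  have hBadfin : Bad.Finite := hUfin.subset hBadsub
  have hsub : (symmDiff Γ Γ') ∩ Metric.ball x R ⊆ f '' Bad ∪ g '' Bad := by
    rintro y ⟨hysym, hyball⟩
    rcases Set.mem_symmDiff.mp hysym with ⟨hyΓ, hyΓ'⟩ | ⟨hyΓ', hyΓ⟩
    · obtain ⟨v, rfl⟩ := hyΓ
      refine Or.inl ⟨v, ⟨Or.inl hyball, ?_⟩, rfl⟩
      intro hgf
      exact hyΓ' ⟨v, hgf.symm⟩
    · obtain ⟨v, rfl⟩ := hyΓ'
      refine Or.inr ⟨v, ⟨Or.inr hyball, ?_⟩, rfl⟩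
      intro hgf
      exact hyΓ ⟨v, hgf⟩
  have hcount1 : (((symmDiff Γ Γ') ∩ Metric.ball x R).ncard : ℝ) ≤ 2 * (Bad.ncard:ℝ) := by
    have h1 : ((symmDiff Γ Γ') ∩ Metric.ball x R).ncard ≤ 2 * Bad.ncard := by
      calc ((symmDiff Γ Γ') ∩ Metric.ball x R).ncard
          ≤ (f '' Bad ∪ g '' Bad).ncard :=
            Set.ncard_le_ncard hsub ((hBadfin.image f).union (hBadfin.image g))
        _ ≤ (f '' Bad).ncard + (g '' Bad).ncard := Set.ncard_union_le _ _
        _ ≤ Bad.ncard + Bad.ncard :=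
            add_le_add (Set.ncard_image_le hBadfin) (Set.ncard_image_le hBadfin)
        _ = 2 * Bad.ncard := (two_mul _).symm
    exact_mod_cast Nat.cast_le.mpr h1
  have hcount2 : (Bad.ncard:ℝ) ≤ ∑ i ∈ S, ((Vs i).ncard:ℝ) := by
    have h1 : Bad.ncard ≤ ∑ i ∈ S, (Vs i).ncard :=
      (Set.ncard_le_ncard hBadsub hUfin).trans (ncard_biUnion_le S Vs)
    exact_mod_cast h1
  set Nb : ℕ := ⌈2*T+1⌉₊ with hNb
  have hNble : (Nb:ℝ) ≤ 2*T + 2 := by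
    rw [hNb]
    have := Nat.ceil_lt_add_one (by positivity : (0:ℝ) ≤ 2*T+1)
    linarith
  have hszk : ∀ k, (hi k + 1 - lo k).toNat ≤ Nb := by
    intro k
    have h1 : ((hi k : ℤ) : ℝ) ≤ x0 k + T := Int.floor_le _
    have h2 : x0 k - T ≤ ((lo k : ℤ) : ℝ) := Int.le_ceil _
    have h3 : ((hi k + 1 - lo k : ℤ):ℝ) ≤ ((Nb:ℤ):ℝ) := by
      push_cast
      have h4 := Nat.le_ceil (2*T+1)
      rw [← hNb] at h4
      linarith
    have h5 : (hi k + 1 - lo k : ℤ) ≤ (Nb:ℤ) := by exact_mod_cast h3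
    omega
  have hT2 : 2*T + 2 ≤ K * R := by
    rw [hT, hK]
    nlinarith [mul_nonneg (by linarith : (0:ℝ) ≤ C + 1) (by linarith : (0:ℝ) ≤ R - 1)]
  have hQR : (Q:ℝ) + 1 ≤ K * R := by nlinarith [mul_nonneg (by linarith : (0:ℝ) ≤ K - 1) hR0.le]
  have hper : ∀ i ∈ S, ((Vs i).ncard : ℝ) ≤ 2 * K^n * R^n / ((Q:ℝ)+1) := by
    intro i hiS
    have hiIQ : i ∉ IQ A := by
      have := (Finset.mem_filter.mp hiS).2
      simpa using this
    have hgapδ : ∀ k : ℤ, k ≠ 0 → |k| ≤ (Q:ℤ) → ∀ m : ℤ, 2*δ ≤ |A i (jf i) * k - m| :=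
      fun k hk hkQ m => le_trans (by linarith [hδdf i]) (hgapf i hiIQ k hk hkQ m)
    have hcb := count_bad (A i) (jf i) lo hi Q δ hgapδ
    have hprodN : (∏ k ∈ Finset.univ.erase (jf i), (hi k + 1 - lo k).toNat) ≤ Nb ^ (n-1) := by
      calc (∏ k ∈ Finset.univ.erase (jf i), (hi k + 1 - lo k).toNat)
          ≤ Nb ^ (Finset.univ.erase (jf i)).card :=
            Finset.prod_le_pow_card _ _ _ (fun k _ => hszk k)
        _ = Nb ^ (n-1) := by
            rw [Finset.card_erase_of_mem (Finset.mem_univ _), Finset.card_univ, Fintype.card_fin]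
    have hN : (Vs i).ncard ≤ ((hi (jf i) - lo (jf i)).toNat / (Q+1) + 1) * Nb ^ (n-1) :=
      hcb.trans (Nat.mul_le_mul_left _ hprodN)
    have hcast : ((Vs i).ncard : ℝ)
        ≤ (((hi (jf i) - lo (jf i)).toNat / (Q+1) + 1 : ℕ):ℝ) * ((Nb:ℝ))^(n-1) := by
      exact_mod_cast hN
    have hhead : (((hi (jf i) - lo (jf i)).toNat / (Q+1) + 1 : ℕ):ℝ) ≤ 2*T/((Q:ℝ)+1) + 1 := by
      push_cast
      have h0 := Nat.cast_div_le (α := ℝ) (m := (hi (jf i) - lo (jf i)).toNat) (n := Q+1)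
      push_cast at h0
      have h1 : (((hi (jf i) - lo (jf i)).toNat : ℕ):ℝ) ≤ 2*T := by
        apply toNat_cast_le
        · push_cast
          have ha := Int.floor_le (x0 (jf i) + T)
          have hb3 := Int.le_ceil (x0 (jf i) - T)
          have hfl : ((hi (jf i) : ℤ):ℝ) ≤ x0 (jf i) + T := ha
          have hcl : x0 (jf i) - T ≤ ((lo (jf i) : ℤ):ℝ) := hb3
          linarith
        · positivity
      have h2 : (((hi (jf i) - lo (jf i)).toNat / (Q+1) : ℕ):ℝ) ≤ 2*T/((Q:ℝ)+1) := by
        refine h0.trans ?_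
        gcongr
      linarith
    have hNbpow : ((Nb:ℝ))^(n-1) ≤ (2*T+2)^(n-1) := pow_le_pow_left₀ (Nat.cast_nonneg _) hNble _
    have hhead2 : 2*T/((Q:ℝ)+1) + 1 ≤ 2*(K*R)/((Q:ℝ)+1) := by
      have h1 : 2*T ≤ K*R := by linarith
      have h2 : (1:ℝ) ≤ K*R/((Q:ℝ)+1) := (one_le_div hQ1).mpr hQR
      have h3 : 2*T/((Q:ℝ)+1) ≤ K*R/((Q:ℝ)+1) := by gcongr
      have h4 : 2*(K*R)/((Q:ℝ)+1) = K*R/((Q:ℝ)+1) + K*R/((Q:ℝ)+1) := by ring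
      linarith
    have hn1 : n - 1 + 1 = n := Nat.succ_pred_eq_of_pos i.pos
    calc ((Vs i).ncard : ℝ)
        ≤ (((hi (jf i) - lo (jf i)).toNat / (Q+1) + 1 : ℕ):ℝ) * ((Nb:ℝ))^(n-1) := hcast
      _ ≤ (2*T/((Q:ℝ)+1) + 1) * (2*T+2)^(n-1) :=
          mul_le_mul hhead hNbpow (pow_nonneg (Nat.cast_nonneg _) _)
            (by have := div_nonneg (by linarith : (0:ℝ) ≤ 2*T) hQ1.le; linarith)
      _ ≤ (2*(K*R)/((Q:ℝ)+1)) * (K*R)^(n-1) :=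
          mul_le_mul hhead2 (pow_le_pow_left₀ (by linarith : (0:ℝ) ≤ 2*T+2) hT2 _)
            (pow_nonneg (by linarith) _)
            (div_nonneg (by nlinarith [mul_pos hKpos hR0]) hQ1.le)
      _ = 2*((K*R)^(n-1) * (K*R)) / ((Q:ℝ)+1) := by ring
      _ = 2*(K*R)^n / ((Q:ℝ)+1) := by rw [← pow_succ, hn1]
      _ = 2 * K^n * R^n / ((Q:ℝ)+1) := by rw [mul_pow]; ring
  clear_value B C K Q Fδ δ Γ Γ' x0 T lo hi Vs f g Bad S Nb
  have hsum : ∑ i ∈ S, ((Vs i).ncard:ℝ) ≤ (n:ℝ) * (2 * K^n * R^n / ((Q:ℝ)+1)) := by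
    have hc : (S.card:ℝ) ≤ (n:ℝ) := by
      rw [hS]
      have := (Finset.card_filter_le Finset.univ (fun i => i ∉ IQ A)).trans
        (le_of_eq (by rw [Finset.card_univ, Fintype.card_fin]))
      exact_mod_cast this
    calc ∑ i ∈ S, ((Vs i).ncard:ℝ) ≤ ∑ _i ∈ S, (2 * K^n * R^n / ((Q:ℝ)+1)) :=
          Finset.sum_le_sum hper
      _ = (S.card:ℝ) * (2 * K^n * R^n / ((Q:ℝ)+1)) := by rw [Finset.sum_const, nsmul_eq_mul]
      _ ≤ (n:ℝ) * (2 * K^n * R^n / ((Q:ℝ)+1)) := by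
          refine mul_le_mul_of_nonneg_right hc ?_
          exact div_nonneg (mul_nonneg (mul_nonneg (by norm_num : (0:ℝ) ≤ 2) hKn.le) (pow_nonneg hR0.le n)) hQ1.le
  have hεp : (0:ℝ) < ε * 2^n := by positivity
  have hq2 : 4*((n:ℝ)+1)*K^n ≤ ((Q:ℝ)+1) * (ε*2^n) := (div_le_iff₀ hεp).mp hQge
  have hq3 : 4*((n:ℝ)+1)*K^n * R^n ≤ ((Q:ℝ)+1) * (ε*2^n) * R^n :=
    mul_le_mul_of_nonneg_right hq2 (pow_nonneg hR0.le n)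
  have hfinal : 2 * ((n:ℝ) * (2 * K^n * R^n / ((Q:ℝ)+1))) ≤ ε * (2*R)^n := by
    rw [mul_pow]
    have h5 : 2 * ((n:ℝ) * (2 * K^n * R^n / ((Q:ℝ)+1))) = 4*(n:ℝ)*K^n*R^n / ((Q:ℝ)+1) := by
      ring
    rw [h5, div_le_iff₀ hQ1]
    have h6 : 4*(n:ℝ)*K^n*R^n ≤ 4*((n:ℝ)+1)*K^n*R^n :=
      mul_le_mul_of_nonneg_right (mul_le_mul_of_nonneg_right
        (by linarith : 4*(n:ℝ) ≤ 4*((n:ℝ)+1)) hKn.le) (pow_nonneg hR0.le n)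
    calc 4*(n:ℝ)*K^n*R^n ≤ ((Q:ℝ)+1)*(ε*2^n)*R^n := le_trans h6 hq3
      _ = ε*(2^n*R^n)*((Q:ℝ)+1) := by ring
  linarith [hcount1, hcount2, hsum, hfinal]
end

section
/- Let Γ ⊆ ℤⁿ be an almost periodic pattern, ε > 0, δ > 0, and A ∈ GLₙ(ℝ). Then there exist R > 0 and a relatively dense set Ñ ⊆ ℝⁿ such that: (i) for every R' ≥ R and v ∈ Ñ, D_{R'}⁺((Γ+v) Δ Γ) < ε; (ii) for every v ∈ Ñ, d_∞(Av, ℤⁿ) < δ; and (iii) for every i ∈ I_ℚ(A) (rows of A with all entries rational) and every v ∈ Ñ, the coordinate (Av)_i is an integer. -/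
open MeasureTheory Metric Set Filter

namespace Stmt13Aux

lemma volBall_eq (n : ℕ) (R : ℝ) (hR : 0 < R) : volBall n R = (2*R)^n := by
  rw [volBall, ball_pi _ hR, volume_pi_pi]
  simp [Real.volume_ball]
  rw [ENNReal.toReal_ofReal (by linarith)]

/-- translated integer lattice -/
def lat (n : ℕ) (v : Fin n → ℝ) : Set (Fin n → ℝ) := {y | ∀ i, ∃ k : ℤ, y i = v i + (k : ℝ)}

def Tame {n : ℕ} (X : Set (Fin n → ℝ)) : Prop := ∃ a b, X ⊆ lat n a ∪ lat n b

lemma lat_ball_finite (n : ℕ) (v x : Fin n → ℝ) (R : ℝ) :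
    (lat n v ∩ Metric.ball x R).Finite ∧
    (lat n v ∩ Metric.ball x R).ncard ≤ (2*⌈R⌉₊+1)^n := by
  by_cases hR : 0 ≤ R
  case neg =>
    have : Metric.ball x R = ∅ := Metric.ball_eq_empty.mpr (by linarith)
    rw [this, Set.inter_empty]
    simp
  set F : Finset (Fin n → ℤ) := Fintype.piFinset (fun i => Finset.Icc ⌈x i - v i - R⌉ ⌊x i - v i + R⌋) with hF
  have hsub : lat n v ∩ Metric.ball x R ⊆
      (fun z : Fin n → ℤ => fun i => v i + (z i : ℝ)) '' (F : Set (Fin n → ℤ)) := by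
    rintro y ⟨hy, hball⟩
    choose z hz using hy
    refine ⟨z, ?_, by funext i; exact (hz i).symm⟩
    rw [Finset.mem_coe, hF, Fintype.mem_piFinset]
    intro i
    rw [Finset.mem_Icc]
    have hd : dist (y i) (x i) ≤ dist y x := dist_le_pi_dist y x i
    have habs : |y i - x i| < R := lt_of_le_of_lt (by rw [← Real.dist_eq]; exact hd) hball
    have habs' := abs_lt.mp habs
    have hyi := hz i
    constructor
    · apply Int.ceil_le.mpr; push_cast; linarith
    · apply Int.le_floor.mpr; push_cast; linarith
  have hFin : (lat n v ∩ Metric.ball x R).Finite :=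
    Set.Finite.subset (F.finite_toSet.image _) hsub
  refine ⟨hFin, ?_⟩
  calc (lat n v ∩ Metric.ball x R).ncard
      ≤ ((fun z : Fin n → ℤ => fun i => v i + (z i : ℝ)) '' (F : Set (Fin n → ℤ))).ncard :=
        Set.ncard_le_ncard hsub (F.finite_toSet.image _)
    _ ≤ (F : Set (Fin n → ℤ)).ncard := Set.ncard_image_le F.finite_toSet
    _ = F.card := by rw [Set.ncard_coe_finset]
    _ ≤ (2*⌈R⌉₊+1)^n := by
        rw [Fintype.card_piFinset]
        have hb : ∀ i ∈ Finset.univ, (Finset.Icc ⌈x i - v i - R⌉ ⌊x i - v i + R⌋).card ≤ (2*⌈R⌉₊+1) := by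
          intro i _
          rw [Int.card_Icc]
          have h1 : (⌊x i - v i + R⌋ + 1 - ⌈x i - v i - R⌉ : ℤ) ≤ (2*⌈R⌉₊+1 : ℤ) := by
            have f1 : (⌊x i - v i + R⌋ : ℝ) ≤ x i - v i + R := Int.floor_le _
            have f2 : x i - v i - R ≤ (⌈x i - v i - R⌉ : ℝ) := Int.le_ceil _
            have f3 : R ≤ (⌈R⌉₊ : ℝ) := Nat.le_ceil R
            have : (⌊x i - v i + R⌋ + 1 - ⌈x i - v i - R⌉ : ℝ) ≤ 2*(⌈R⌉₊:ℝ)+1 := by push_cast; linarith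
            exact_mod_cast this
          omega
        simpa using Finset.prod_le_pow_card Finset.univ _ _ hb

section tame
variable {n : ℕ} {S T : Set (Fin n → ℝ)} {a b : Fin n → ℝ}

lemma tame_count (X : Set (Fin n → ℝ)) (hX : Tame X) (x : Fin n → ℝ) (R : ℝ) :
    (X ∩ Metric.ball x R).Finite ∧ (X ∩ Metric.ball x R).ncard ≤ 2*(2*⌈R⌉₊+1)^n := by
  obtain ⟨a, b, hab⟩ := hX
  have hsub : X ∩ Metric.ball x R ⊆
      (lat n a ∩ Metric.ball x R) ∪ (lat n b ∩ Metric.ball x R) := by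
    rintro y ⟨hy, hb⟩
    rcases hab hy with h | h
    · exact Or.inl ⟨h, hb⟩
    · exact Or.inr ⟨h, hb⟩
  have hfa := lat_ball_finite n a x R
  have hfb := lat_ball_finite n b x R
  have hfin : (X ∩ Metric.ball x R).Finite :=
    Set.Finite.subset (hfa.1.union hfb.1) hsub
  refine ⟨hfin, ?_⟩
  calc (X ∩ Metric.ball x R).ncard
      ≤ ((lat n a ∩ Metric.ball x R) ∪ (lat n b ∩ Metric.ball x R)).ncard :=
        Set.ncard_le_ncard hsub (hfa.1.union hfb.1)
    _ ≤ (lat n a ∩ Metric.ball x R).ncard + (lat n b ∩ Metric.ball x R).ncard :=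
        Set.ncard_union_le _ _
    _ ≤ 2*(2*⌈R⌉₊+1)^n := by have := hfa.2; have := hfb.2; omega

lemma tame_symmDiff (hS : S ⊆ lat n a) (hT : T ⊆ lat n b) : Tame (symmDiff S T) :=
  ⟨a, b, fun y hy => by
    rcases hy with ⟨hy, _⟩ | ⟨hy, _⟩
    · exact Or.inl (hS hy)
    · exact Or.inr (hT hy)⟩

lemma DRplus_bddAbove (hST : Tame (symmDiff S T)) (R : ℝ) :
    BddAbove (Set.range fun x : Fin n → ℝ =>
      (((symmDiff S T) ∩ Metric.ball x R).ncard : ℝ) / volBall n R) := by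
  refine ⟨(2*(2*⌈R⌉₊+1)^n : ℝ) / volBall n R, ?_⟩
  rintro r ⟨x, rfl⟩
  have hn : (((symmDiff S T) ∩ Metric.ball x R).ncard : ℝ) ≤ (2*(2*⌈R⌉₊+1)^n : ℝ) := by
    exact_mod_cast (tame_count _ hST x R).2
  rcases eq_or_lt_of_le (ENNReal.toReal_nonneg : (0:ℝ) ≤ volBall n R) with h | h
  · rw [show volBall n R = 0 from h.symm]; simp
  · exact (div_le_div_iff_of_pos_right h).mpr hn

end tame



variable {n : ℕ} {S T U : Set (Fin n → ℝ)} {R : ℝ} {w : Fin n → ℝ}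

lemma DRplus_nonneg : 0 ≤ DRplus R S T :=
  Real.iSup_nonneg fun _ => div_nonneg (Nat.cast_nonneg _) ENNReal.toReal_nonneg

lemma DRplus_le {c : ℝ} (hc : 0 ≤ c)
    (h : ∀ x, (((symmDiff S T) ∩ Metric.ball x R).ncard : ℝ) / volBall n R ≤ c) :
    DRplus R S T ≤ c := Real.iSup_le h hc

lemma DRplus_ge (hST : Tame (symmDiff S T)) (x : Fin n → ℝ) :
    (((symmDiff S T) ∩ Metric.ball x R).ncard : ℝ) / volBall n R ≤ DRplus R S T :=
  le_ciSup (DRplus_bddAbove hST R) x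

lemma addw_inj : Function.Injective (fun y : Fin n → ℝ => y + w) :=
  fun y z h => by simpa using congrArg (· - w) h

lemma symmDiff_image :
    symmDiff ((· + w) '' S) ((· + w) '' T) = (· + w) '' symmDiff S T := by
  simp only [Set.symmDiff_def, Set.image_union, Set.image_diff addw_inj]

lemma image_inter_ball (X : Set (Fin n → ℝ)) (x : Fin n → ℝ) :
    ((· + w) '' X) ∩ Metric.ball x R = (· + w) '' (X ∩ Metric.ball (x - w) R) := by
  rw [show X ∩ Metric.ball (x - w) R = X ∩ (· + w) ⁻¹' (Metric.ball x R) by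
        congr 1
        ext y
        simp only [Set.mem_preimage, Metric.mem_ball, dist_eq_norm]
        rw [show y + w - x = y - (x - w) by abel],
      Set.image_inter_preimage]

lemma DRplus_shift : DRplus R ((· + w) '' S) ((· + w) '' T) = DRplus R S T := by
  unfold DRplus
  rw [symmDiff_image]
  have hx : ∀ x : Fin n → ℝ, (((· + w) '' symmDiff S T) ∩ Metric.ball x R).ncard
      = ((symmDiff S T) ∩ Metric.ball (x - w) R).ncard := by
    intro x
    rw [image_inter_ball, Set.ncard_image_of_injective _ addw_inj]
  simp_rw [hx]
  rw [iSup, iSup]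
  congr 1
  have : (fun x : Fin n → ℝ => (((symmDiff S T) ∩ Metric.ball (x - w) R).ncard : ℝ) / volBall n R)
      = (fun x : Fin n → ℝ => (((symmDiff S T) ∩ Metric.ball x R).ncard : ℝ) / volBall n R) ∘ (fun x => x - w) := rfl
  rw [this, Function.Surjective.range_comp (fun y => ⟨y + w, by simp⟩) _]

lemma DRplus_comm : DRplus R S T = DRplus R T S := by
  unfold DRplus; rw [symmDiff_comm]

section main
variable {n : ℕ} {Γ S T U : Set (Fin n → ℝ)} {R : ℝ} {a b c s t v : Fin n → ℝ}

lemma image_sub_lat (hΓ : Γ ⊆ intLat n) : (· + v) '' Γ ⊆ lat n v := by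
  rintro y ⟨γ, hγ, rfl⟩
  intro i
  obtain ⟨k, hk⟩ := hΓ hγ i
  exact ⟨k, by simp [hk, add_comm]⟩

lemma self_sub_lat (hΓ : Γ ⊆ intLat n) : Γ ⊆ lat n 0 := by
  intro y hy i
  obtain ⟨k, hk⟩ := hΓ hy i
  exact ⟨k, by simp [hk]⟩

lemma DRplus_triangle (hS : S ⊆ lat n a) (hT : T ⊆ lat n b) (hU : U ⊆ lat n c) :
    DRplus R S U ≤ DRplus R S T + DRplus R T U := by
  apply DRplus_le (add_nonneg DRplus_nonneg DRplus_nonneg)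
  intro x
  have hsub : symmDiff S U ∩ Metric.ball x R ⊆
      (symmDiff S T ∩ Metric.ball x R) ∪ (symmDiff T U ∩ Metric.ball x R) := by
    rintro y ⟨hy, hb⟩
    rcases symmDiff_triangle S T U hy with h | h
    · exact Or.inl ⟨h, hb⟩
    · exact Or.inr ⟨h, hb⟩
  have f1 := (tame_count _ (tame_symmDiff hS hT) x R).1
  have f2 := (tame_count _ (tame_symmDiff hT hU) x R).1
  have hcard : (symmDiff S U ∩ Metric.ball x R).ncard ≤
      (symmDiff S T ∩ Metric.ball x R).ncard + (symmDiff T U ∩ Metric.ball x R).ncard := by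
    calc (symmDiff S U ∩ Metric.ball x R).ncard
        ≤ ((symmDiff S T ∩ Metric.ball x R) ∪ (symmDiff T U ∩ Metric.ball x R)).ncard :=
          Set.ncard_le_ncard hsub (f1.union f2)
      _ ≤ _ := Set.ncard_union_le _ _
  rcases eq_or_lt_of_le (ENNReal.toReal_nonneg : (0:ℝ) ≤ volBall n R) with h | h
  · rw [show volBall n R = 0 from h.symm]
    simp [add_nonneg (DRplus_nonneg : (0:ℝ) ≤ DRplus R S T) DRplus_nonneg]
  · calc (((symmDiff S U) ∩ Metric.ball x R).ncard : ℝ) / volBall n R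
        ≤ (((symmDiff S T ∩ Metric.ball x R).ncard : ℝ) + ((symmDiff T U ∩ Metric.ball x R).ncard : ℝ)) / volBall n R := by
          apply (div_le_div_iff_of_pos_right h).mpr
          exact_mod_cast hcard
      _ = ((symmDiff S T ∩ Metric.ball x R).ncard : ℝ) / volBall n R
          + ((symmDiff T U ∩ Metric.ball x R).ncard : ℝ) / volBall n R := add_div _ _ _
      _ ≤ _ := add_le_add (DRplus_ge (tame_symmDiff hS hT) x) (DRplus_ge (tame_symmDiff hT hU) x)
end main

section main2
variable {n : ℕ} {Γ : Set (Fin n → ℝ)} {R : ℝ} {s t f : Fin n → ℝ}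

lemma image_image_add : (· + t) '' ((· + s) '' Γ) = (· + (s + t)) '' Γ := by
  rw [Set.image_image]
  congr 1
  funext y
  abel_nf

lemma image_add_zero : (· + (0 : Fin n → ℝ)) '' Γ = Γ := by
  simp

lemma DRplus_self_eq_zero : DRplus R Γ Γ = 0 := by
  unfold DRplus
  simp [symmDiff_self]

lemma DRplus_add (hΓ : Γ ⊆ intLat n) :
    DRplus R ((· + (s + t)) '' Γ) Γ ≤ DRplus R ((· + s) '' Γ) Γ + DRplus R ((· + t) '' Γ) Γ := by
  have h1 : DRplus R ((· + (s + t)) '' Γ) ((· + t) '' Γ) = DRplus R ((· + s) '' Γ) Γ := by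
    rw [← image_image_add, DRplus_shift]
  calc DRplus R ((· + (s + t)) '' Γ) Γ
      ≤ DRplus R ((· + (s + t)) '' Γ) ((· + t) '' Γ) + DRplus R ((· + t) '' Γ) Γ :=
        DRplus_triangle (image_sub_lat hΓ) (image_sub_lat hΓ) (self_sub_lat hΓ)
    _ = _ := by rw [h1]

lemma DRplus_nsmul (hΓ : Γ ⊆ intLat n) (k : ℕ) :
    DRplus R ((· + (k • t)) '' Γ) Γ ≤ (k : ℝ) * DRplus R ((· + t) '' Γ) Γ := by
  induction k with
  | zero => simp [image_add_zero, DRplus_self_eq_zero]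
  | succ k ih =>
      have : (k + 1) • t = k • t + t := by
        rw [add_smul, one_smul]
      rw [this]
      calc DRplus R ((· + (k • t + t)) '' Γ) Γ
          ≤ DRplus R ((· + (k • t)) '' Γ) Γ + DRplus R ((· + t) '' Γ) Γ := DRplus_add hΓ
        _ ≤ (k : ℝ) * DRplus R ((· + t) '' Γ) Γ + DRplus R ((· + t) '' Γ) Γ :=
            add_le_add ih le_rfl
        _ = ((k + 1 : ℕ) : ℝ) * DRplus R ((· + t) '' Γ) Γ := by push_cast; ring

lemma DRplus_neg : DRplus R ((· + (-f)) '' Γ) Γ = DRplus R ((· + f) '' Γ) Γ := by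
  have h1 : DRplus R ((· + f) '' ((· + (-f)) '' Γ)) ((· + f) '' Γ) = DRplus R ((· + (-f)) '' Γ) Γ :=
    DRplus_shift
  rw [← h1, image_image_add]
  have : -f + f = 0 := by abel
  rw [this, image_add_zero, DRplus_comm]

end main2

section stepB
variable {n : ℕ} {Γ : Set (Fin n → ℝ)}

lemma count_lower (hZ : Γ ⊆ intLat n) {L : ℝ} (hL : 0 < L)
    (hrel : ∀ x : Fin n → ℝ, ∃ γ ∈ Γ, dist γ x < L) (m : ℕ) (hm : 1 ≤ m) :
    (m : ℕ)^n ≤ (Γ ∩ Metric.ball 0 (2*L*m)).ncard := by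
  classical
  set g : (Fin n → ℤ) → (Fin n → ℝ) := fun k i => 2*L*(k i) with hg
  choose γ hγΓ hγd using fun k : Fin n → ℤ => hrel (g k)
  set K : Finset (Fin n → ℤ) := Fintype.piFinset (fun _ => Finset.Icc (-(m-1 : ℤ)) (m-1)) with hK
  have hKmem : ∀ k ∈ K, ∀ i, |(k i : ℝ)| ≤ (m - 1 : ℝ) := by
    intro k hk i
    rw [hK, Fintype.mem_piFinset] at hk
    have := hk i
    rw [Finset.mem_Icc] at this
    rw [abs_le]
    constructor
    · have : (-(m-1:ℤ) : ℝ) ≤ (k i : ℝ) := by exact_mod_cast this.1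
      push_cast at this ⊢
      linarith [ (by exact_mod_cast Nat.one_le_cast.mpr hm : (1:ℝ) ≤ (m:ℝ)) ]
    · have : ((k i : ℝ)) ≤ ((m-1:ℤ) : ℝ) := by exact_mod_cast this.2
      push_cast at this ⊢
      linarith [ (by exact_mod_cast Nat.one_le_cast.mpr hm : (1:ℝ) ≤ (m:ℝ)) ]
  have hmem : ∀ k ∈ K, γ k ∈ Γ ∩ Metric.ball 0 (2*L*m) := by
    intro k hk
    refine ⟨hγΓ k, ?_⟩
    rw [Metric.mem_ball]
    have h1 : dist (g k) 0 ≤ 2*L*(m-1 : ℝ) := by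
      rw [dist_pi_le_iff (by nlinarith [ (by exact_mod_cast Nat.one_le_cast.mpr hm : (1:ℝ) ≤ (m:ℝ))])]
      intro i
      rw [Real.dist_eq]
      simp only [hg, Pi.zero_apply, sub_zero]
      rw [abs_mul, abs_of_pos (by linarith : (0:ℝ) < 2*L)]
      have := hKmem k hk i
      nlinarith
    calc dist (γ k) 0 ≤ dist (γ k) (g k) + dist (g k) 0 := dist_triangle _ _ _
      _ < L + 2*L*(m-1:ℝ) := add_lt_add_of_lt_of_le (hγd k) h1
      _ ≤ 2*L*m := by push_cast; nlinarith [ (by exact_mod_cast Nat.one_le_cast.mpr hm : (1:ℝ) ≤ (m:ℝ))]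
  have hinj : Set.InjOn γ (K : Set (Fin n → ℤ)) := by
    intro k hk k' hk' heq
    by_contra hne
    obtain ⟨i, hi⟩ := Function.ne_iff.mp hne
    have h2L : (2*L : ℝ) ≤ |g k i - g k' i| := by
      simp only [hg]
      rw [← mul_sub, abs_mul, abs_of_pos (by linarith : (0:ℝ) < 2*L)]
      have : (1:ℝ) ≤ |(k i : ℝ) - (k' i : ℝ)| := by
        have h0 : (1:ℤ) ≤ |k i - k' i| := Int.one_le_abs (sub_ne_zero.mpr hi)
        calc (1:ℝ) ≤ ((|k i - k' i| : ℤ) : ℝ) := by exact_mod_cast h0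
          _ = |(k i : ℝ) - (k' i : ℝ)| := by rw [Int.cast_abs]; push_cast; ring_nf
      nlinarith
    have hlt : dist (g k) (g k') < 2*L := by
      calc dist (g k) (g k') ≤ dist (g k) (γ k) + dist (γ k) (g k') := dist_triangle _ _ _
        _ = dist (g k) (γ k) + dist (γ k') (g k') := by rw [heq]
        _ < L + L := add_lt_add (dist_comm (γ k) (g k) ▸ hγd k) (hγd k')
        _ = 2*L := by ring
    have : dist (g k i) (g k' i) ≤ dist (g k) (g k') := dist_le_pi_dist _ _ i
    rw [Real.dist_eq] at this
    linarith
  have hfin : (Γ ∩ Metric.ball 0 (2*L*m)).Finite :=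
    Set.Finite.subset (lat_ball_finite n 0 0 (2*L*m)).1
      (fun y hy => ⟨self_sub_lat hZ hy.1, hy.2⟩)
  have hcard : (K : Set (Fin n → ℤ)).ncard ≤ (Γ ∩ Metric.ball 0 (2*L*m)).ncard :=
    Set.ncard_le_ncard_of_injOn γ (fun k hk => hmem k (by exact_mod_cast hk)) 
      hinj hfin
  have hKcard : (2*(m-1)+1)^n = K.card := by
    rw [hK, Fintype.card_piFinset]
    simp [Int.card_Icc]
    congr 1
    omega
  calc m^n ≤ (2*(m-1)+1)^n := Nat.pow_le_pow_left (by omega) n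
    _ = K.card := hKcard
    _ = (K : Set (Fin n → ℤ)).ncard := (Set.ncard_coe_finset K).symm
    _ ≤ _ := hcard
end stepB

section stepB2
variable {n : ℕ} {Γ : Set (Fin n → ℝ)}


lemma DRplus_lower_nonlat (hZ : Γ ⊆ intLat n) {L : ℝ} (hL : 0 < L)
    (hrel : ∀ x : Fin n → ℝ, ∃ γ ∈ Γ, dist γ x < L) {v : Fin n → ℝ}
    (hv : v ∉ intLat n) (m : ℕ) (hm : 1 ≤ m) :
    ((1:ℝ)/(4*L))^n ≤ DRplus (2*L*m) ((· + v) '' Γ) Γ := by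
  have hm' : (1:ℝ) ≤ (m:ℝ) := by exact_mod_cast hm
  set R' : ℝ := 2*L*m with hR'
  have hR'pos : 0 < R' := by rw [hR']; nlinarith
  -- disjointness
  have hdis : ∀ y ∈ Γ, y ∉ (· + v) '' Γ := by
    rintro y hy ⟨γ, hγ, rfl⟩
    simp only [intLat, Set.mem_setOf_eq, not_forall] at hv
    obtain ⟨i, hvi⟩ := hv
    obtain ⟨k1, hk1⟩ := hZ hγ i
    obtain ⟨k2, hk2⟩ := hZ hy i
    exact hvi ⟨k2 - k1, by push_cast; have : γ i + v i = (k2:ℝ) := hk2; linarith [hk1]⟩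
  have hsub : Γ ∩ Metric.ball 0 R' ⊆ symmDiff ((· + v) '' Γ) Γ ∩ Metric.ball 0 R' := by
    rintro y ⟨hy, hb⟩
    exact ⟨Or.inr ⟨hy, hdis y hy⟩, hb⟩
  have htame : Tame (symmDiff ((· + v) '' Γ) Γ) :=
    tame_symmDiff (image_sub_lat hZ) (self_sub_lat hZ)
  have hfin : (symmDiff ((· + v) '' Γ) Γ ∩ Metric.ball 0 R').Finite :=
    (tame_count _ htame 0 R').1
  have hcard : (m:ℕ)^n ≤ (symmDiff ((· + v) '' Γ) Γ ∩ Metric.ball 0 R').ncard :=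
    le_trans (count_lower hZ hL hrel m hm) (Set.ncard_le_ncard hsub hfin)
  have hvol : volBall n R' = (4*L*m)^n := by
    rw [volBall_eq n R' hR'pos, hR']; ring_nf
  have hge := DRplus_ge (R := R') htame 0
  refine le_trans ?_ hge
  rw [hvol]
  have hcalc : ((1:ℝ)/(4*L))^n = ((m:ℝ)^n)/(4*L*m)^n := by
    rw [← div_pow]
    congr 1
    rw [eq_div_iff (by positivity)]
    field_simp
  rw [hcalc]
  have hcast : ((m:ℝ)^n) ≤ ((symmDiff ((· + v) '' Γ) Γ ∩ Metric.ball 0 R').ncard : ℝ) := by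
    exact_mod_cast hcard
  exact div_le_div_of_nonneg_right hcast (by positivity)
end stepB2

lemma rat_mul_den {q : ℚ} {k : ℕ} (h : q.den ∣ k) : ∃ m : ℤ, (q:ℝ) * k = (m : ℝ) := by
  obtain ⟨c, hc⟩ := h
  refine ⟨q.num * c, ?_⟩
  rw [Rat.cast_def, hc]
  push_cast
  have hden : (q.den : ℝ) ≠ 0 := by
    exact_mod_cast q.den_ne_zero
  field_simp

lemma floor_box {a b : ℝ} (h : ⌊a⌋ = ⌊b⌋) : |a - b| < 1 := by
  have h1 : (⌊a⌋ : ℝ) ≤ a := Int.floor_le a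
  have h2 : a < ⌊a⌋ + 1 := Int.lt_floor_add_one a
  have h3 : (⌊b⌋ : ℝ) ≤ b := Int.floor_le b
  have h4 : b < ⌊b⌋ + 1 := Int.lt_floor_add_one b
  rw [abs_lt]
  rw [h] at h1 h2
  constructor <;> linarith

end Stmt13Aux

open Stmt13Aux in
theorem stmt13 {n : ℕ} (Γ : Set (Fin n → ℝ)) (hZ : Γ ⊆ intLat n) (hΓ : IsAPP Γ)
    (ε δ : ℝ) (hε : 0 < ε) (hδ : 0 < δ)
    (A : Matrix (Fin n) (Fin n) ℝ) (hA : IsUnit A.det) :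
    ∃ R > (0:ℝ), ∃ N : Set (Fin n → ℝ), RelDense N ∧
      (∀ R' ≥ R, ∀ v ∈ N, DRplus R' ((· + v) '' Γ) Γ < ε) ∧
      (∀ v ∈ N, ∃ z : Fin n → ℤ, dist (A.mulVec v) (fun i => (z i : ℝ)) < δ) ∧
      (∀ i ∈ IQ A, ∀ v ∈ N, ∃ m : ℤ, A.mulVec v i = (m : ℝ)) := by
  classical
  obtain ⟨⟨_, ⟨L, hLpos, hrel⟩⟩, hAPP⟩ := hΓ
  -- rational data
  set qent : Fin n → Fin n → ℚ := fun i j =>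
    if h : ∃ q : ℚ, A i j = (q:ℝ) then h.choose else 0 with hqent
  set D : ℕ := ∏ i : Fin n, ∏ j : Fin n, (qent i j).den with hD
  have hDpos : 0 < D := Finset.prod_pos fun i _ => Finset.prod_pos fun j _ => (qent i j).pos
  have hD1 : (1:ℝ) ≤ (D:ℝ) := by exact_mod_cast hDpos
  have hqA : ∀ i ∈ IQ A, ∀ j, A i j = ((qent i j : ℚ) : ℝ) := by
    intro i hi j
    have h : ∃ q : ℚ, A i j = (q:ℝ) := hi j
    simp only [hqent, dif_pos h]
    exact h.choose_spec
  have hden : ∀ i j, (qent i j).den ∣ D := by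
    intro i j
    rw [hD]
    calc (qent i j).den ∣ ∏ j', (qent i j').den :=
          Finset.dvd_prod_of_mem _ (Finset.mem_univ j)
      _ ∣ ∏ i', ∏ j', (qent i' j').den :=
          Finset.dvd_prod_of_mem (fun i' => ∏ j', (qent i' j').den) (Finset.mem_univ i)
  have hratRow : ∀ i ∈ IQ A, ∀ z : Fin n → ℤ, ∃ m : ℤ,
      A.mulVec (fun j => (D:ℝ) * (z j)) i = (m:ℝ) := by
    intro i hi z
    have hterm : ∀ j, ∃ m : ℤ, A i j * ((D:ℝ) * z j) = (m:ℝ) := by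
      intro j
      obtain ⟨m0, hm0⟩ := rat_mul_den (hden i j)
      refine ⟨m0 * z j, ?_⟩
      rw [hqA i hi j, ← mul_assoc, hm0]
      push_cast
      ring
    choose mj hmj using hterm
    refine ⟨∑ j, mj j, ?_⟩
    have : A.mulVec (fun j => (D:ℝ) * (z j)) i = ∑ j, A i j * ((D:ℝ) * z j) := by
      simp [Matrix.mulVec, dotProduct]
    rw [this]
    push_cast
    exact Finset.sum_congr rfl fun j _ => hmj j
  -- epsilon bookkeeping
  set ε₀ : ℝ := ((1:ℝ)/(4*L))^n with hε₀
  have hε₀pos : 0 < ε₀ := by positivity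
  set ε₁ : ℝ := min ε₀ (ε/(2*D)) with hε₁
  have hε₁pos : 0 < ε₁ := lt_min hε₀pos (by positivity)
  obtain ⟨Rε, hRεpos, LT, hLTpos, hTd⟩ := hAPP ε₁ hε₁pos
  -- translations are lattice vectors
  have hTlat : ∀ t ∈ transSet Γ ε₁ Rε, t ∈ intLat n := by
    intro t ht
    by_contra hnot
    set m : ℕ := max 1 ⌈Rε/(2*L)⌉₊ with hm
    have hm1 : 1 ≤ m := le_max_left _ _
    have hR'ge : 2*L*(m:ℝ) ≥ Rε := by
      have h1 : Rε/(2*L) ≤ (⌈Rε/(2*L)⌉₊ : ℝ) := Nat.le_ceil _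
      have h2 : ((⌈Rε/(2*L)⌉₊ : ℕ) : ℝ) ≤ (m:ℝ) := by exact_mod_cast le_max_right 1 _
      have h3 : Rε/(2*L) ≤ (m:ℝ) := le_trans h1 h2
      calc Rε = 2*L*(Rε/(2*L)) := by field_simp
        _ ≤ 2*L*(m:ℝ) := by nlinarith
    have hlt := ht _ hR'ge
    have hge := DRplus_lower_nonlat hZ hLpos hrel hnot m hm1
    have : ε₁ ≤ ε₀ := min_le_left _ _
    rw [hε₀] at this
    linarith
  -- the set S of D-multiples of translations
  set S : Set (Fin n → ℝ) := {w | (∀ R' ≥ Rε, DRplus R' ((· + w) '' Γ) Γ < ε/2) ∧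
      ∃ z : Fin n → ℤ, w = fun j => (D:ℝ) * (z j)} with hS
  have hDsm : ∀ t ∈ transSet Γ ε₁ Rε, (D • t) ∈ S := by
    intro t ht
    constructor
    · intro R' hR'
      have h1 := DRplus_nsmul (R := R') (t := t) hZ D
      have h2 := ht R' hR'
      have h3 : (D:ℝ) * DRplus R' ((· + t) '' Γ) Γ < (D:ℝ) * ε₁ := by
        apply mul_lt_mul_of_pos_left h2 (by positivity)
      have h4 : (D:ℝ) * ε₁ ≤ ε/2 := by
        have : ε₁ ≤ ε/(2*D) := min_le_right _ _
        calc (D:ℝ) * ε₁ ≤ (D:ℝ) * (ε/(2*D)) := by nlinarith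
          _ = ε/2 := by field_simp
      linarith
    · obtain ⟨z, hz⟩ : ∃ z : Fin n → ℤ, ∀ i, t i = (z i : ℝ) := by
        have := hTlat t ht
        choose z hz using this
        exact ⟨z, hz⟩
      refine ⟨z, ?_⟩
      funext j
      simp [hz j, mul_comm]
  -- boxes
  set M : ℕ := ⌈2/δ⌉₊ with hM
  have hMpos : 0 < M := Nat.ceil_pos.mpr (by positivity)
  have hMcast : (0:ℝ) < (M:ℝ) := by exact_mod_cast hMpos
  have hMδ : (1:ℝ)/M ≤ δ/2 := by
    have h1 : 2/δ ≤ (M:ℝ) := Nat.le_ceil _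
    have h2 : (0:ℝ) < 2/δ := by positivity
    have h3 : (1:ℝ)/(M:ℝ) ≤ 1/(2/δ) := one_div_le_one_div_of_le h2 h1
    have h4 : (1:ℝ)/(2/δ) = δ/2 := by field_simp
    linarith
  set bx : (Fin n → ℝ) → (Fin n → ℤ) := fun y i => ⌊Int.fract (y i) * M⌋ with hbx
  have hclose : ∀ y y' : ℝ, ⌊Int.fract y * M⌋ = ⌊Int.fract y' * M⌋ →
      |y - y' - ((⌊y⌋ - ⌊y'⌋ : ℤ):ℝ)| < δ := by
    intro y y' hb
    have h1 := floor_box hb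
    have h2 : |Int.fract y - Int.fract y'| < 1/M := by
      rw [lt_div_iff₀ hMcast]
      rw [show ((M:ℝ)) = |(M:ℝ)| from (abs_of_pos hMcast).symm, ← abs_mul, sub_mul]
      exact h1
    have h3 : y - y' - ((⌊y⌋ - ⌊y'⌋ : ℤ):ℝ) = Int.fract y - Int.fract y' := by
      rw [← Int.self_sub_floor, ← Int.self_sub_floor]
      push_cast
      ring
    rw [h3]
    calc |Int.fract y - Int.fract y'| < 1/M := h2
      _ ≤ δ/2 := hMδ
      _ < δ := by linarith
  -- occupied boxes and representatives
  set occ : Set (Fin n → ℤ) := (fun w => bx (A.mulVec w)) '' S with hocc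
  have hoccFin : occ.Finite := by
    apply Set.Finite.subset (Set.finite_Icc (fun _ : Fin n => (0:ℤ)) (fun _ => (M-1:ℤ)))
    rintro b ⟨w, hw, rfl⟩
    rw [Set.mem_Icc]
    constructor
    · intro i
      exact Int.floor_nonneg.mpr (mul_nonneg (Int.fract_nonneg _) (by positivity))
    · intro i
      have h5 : Int.fract (A.mulVec w i) * M < M := by
        have := Int.fract_lt_one (A.mulVec w i)
        nlinarith [Int.fract_nonneg (A.mulVec w i)]
      have h6 : ⌊Int.fract (A.mulVec w i) * M⌋ < (M:ℤ) := Int.floor_lt.mpr (by exact_mod_cast h5)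
      show ⌊Int.fract (A.mulVec w i) * (M:ℝ)⌋ ≤ (M:ℤ) - 1
      omega
  have hrep : ∀ b, ∃ w, b ∈ occ → (w ∈ S ∧ bx (A.mulVec w) = b) := by
    intro b
    by_cases hb : b ∈ occ
    · obtain ⟨w, hw, hbw⟩ := hb
      exact ⟨w, fun _ => ⟨hw, hbw⟩⟩
    · exact ⟨0, fun h => absurd h hb⟩
  choose rep hrepspec using hrep
  obtain ⟨C0, hC0⟩ : ∃ C0, ∀ y ∈ rep '' occ, ‖y‖ ≤ C0 := by
    obtain ⟨C0, hC0⟩ := ((hoccFin.image rep).image (fun y => ‖y‖)).bddAbove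
    exact ⟨C0, fun y hy => hC0 ⟨y, hy, rfl⟩⟩
  set C : ℝ := max C0 0 with hC
  have hCnn : 0 ≤ C := le_max_right _ _
  -- the set N
  set N : Set (Fin n → ℝ) := {v | (∀ R' ≥ Rε, DRplus R' ((· + v) '' Γ) Γ < ε) ∧
      (∃ z : Fin n → ℤ, dist (A.mulVec v) (fun i => (z i : ℝ)) < δ) ∧
      (∀ i ∈ IQ A, ∃ m : ℤ, A.mulVec v i = (m:ℝ))} with hN
  refine ⟨Rε, hRεpos, N, ?_, fun R' hR' v hv => hv.1 R' hR', fun v hv => hv.2.1,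
    fun i hi v hv => hv.2.2 i hi⟩
  have hdiff : ∀ u ∈ S, ∀ f ∈ S, bx (A.mulVec u) = bx (A.mulVec f) → (u - f) ∈ N := by
    intro u hu f hf hb
    refine ⟨?_, ?_, ?_⟩
    · intro R' hR'
      have h1 : DRplus R' ((· + (u + -f)) '' Γ) Γ ≤
          DRplus R' ((· + u) '' Γ) Γ + DRplus R' ((· + (-f)) '' Γ) Γ := DRplus_add hZ
      rw [DRplus_neg] at h1
      have h2 := hu.1 R' hR'
      have h3 := hf.1 R' hR'
      rw [sub_eq_add_neg]
      linarith
    · refine ⟨fun i => ⌊A.mulVec u i⌋ - ⌊A.mulVec f i⌋, ?_⟩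
      rw [dist_pi_lt_iff hδ]
      intro i
      have hbi : ⌊Int.fract (A.mulVec u i) * M⌋ = ⌊Int.fract (A.mulVec f i) * M⌋ :=
        congrFun hb i
      have hcl := hclose _ _ hbi
      rw [Real.dist_eq, Matrix.mulVec_sub, Pi.sub_apply]
      exact hcl
    · intro i hi
      obtain ⟨zu, hzu⟩ := hu.2
      obtain ⟨zf, hzf⟩ := hf.2
      obtain ⟨mu, hmu⟩ := hratRow i hi zu
      obtain ⟨mf, hmf⟩ := hratRow i hi zf
      refine ⟨mu - mf, ?_⟩
      have h1 : A.mulVec u i = (mu:ℝ) := by rw [hzu]; exact hmu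
      have h2 : A.mulVec f i = (mf:ℝ) := by rw [hzf]; exact hmf
      rw [Matrix.mulVec_sub, Pi.sub_apply, h1, h2]
      push_cast
      ring
  -- relative density
  refine ⟨(D:ℝ)*LT + C + 1, by nlinarith, fun x => ?_⟩
  obtain ⟨t, ht, htd⟩ := hTd (((D:ℝ)⁻¹) • x)
  have hDne : (D:ℝ) ≠ 0 := by positivity
  set u : Fin n → ℝ := D • t with hu
  have huS : u ∈ S := hDsm t ht
  have hud : dist u x < (D:ℝ) * LT := by
    have h0 : u = (D:ℝ) • t := by
      funext j
      simp [hu]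
    have h1 : x = (D:ℝ) • (((D:ℝ)⁻¹) • x) := by
      rw [smul_smul, mul_inv_cancel₀ hDne, one_smul]
    calc dist u x = dist ((D:ℝ) • t) ((D:ℝ) • (((D:ℝ)⁻¹) • x)) := by rw [← h0, ← h1]
      _ = ‖(D:ℝ)‖ * dist t (((D:ℝ)⁻¹) • x) := dist_smul₀ _ _ _
      _ = (D:ℝ) * dist t (((D:ℝ)⁻¹) • x) := by rw [Real.norm_eq_abs, abs_of_pos (by positivity)]
      _ < (D:ℝ) * LT := by
          apply mul_lt_mul_of_pos_left htd (by positivity)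
  have hboccu : bx (A.mulVec u) ∈ occ := ⟨u, huS, rfl⟩
  set f : Fin n → ℝ := rep (bx (A.mulVec u)) with hf
  have hfspec := hrepspec _ hboccu
  have hfC : ‖f‖ ≤ C := le_trans (hC0 f ⟨_, hboccu, rfl⟩) (le_max_left _ _)
  refine ⟨u - f, hdiff u huS f hfspec.1 hfspec.2.symm, ?_⟩
  have hdfu : dist (u - f) u = ‖f‖ := by
    rw [dist_eq_norm, show u - f - u = -f by abel, norm_neg]
  calc dist (u - f) x ≤ dist (u - f) u + dist u x := dist_triangle _ _ _
    _ = ‖f‖ + dist u x := by rw [hdfu]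
    _ < C + (D:ℝ)*LT := by linarith
    _ < (D:ℝ)*LT + C + 1 := by linarith
end
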